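/- arXiv:math/0109013 — 15 statements merged into one kernel-verified Lean document; each statement's English description precedes it below -/
import Mathlib

section
/- The determinant of the n×n matrix with entries (i+j+s+t choose i+s) for 0 ≤ i,j < n equals the product over k from 0 to s-1 of (n+k+t choose t)/(k+t choose t). -/
open Finset Polynomial Nat

private lemma fact_add_eq (a b : ℕ) :
    ((a + b)! : ℚ) = (a ! : ℚ) * ∏ k ∈ Finset.range b, ((a : ℚ) + k + 1) := by
  induction b with
  | zero => simp
  | succ b ih =>
    rw [Finset.prod_range_succ, ← add_assoc, ← mul_assoc, ← ih]
    rw [Nat.factorial_succ]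
    push_cast
    ring

private lemma vdm_det (n : ℕ) (c : ℚ) :
    (Matrix.vandermonde (fun i : Fin n => (i : ℚ) + c)).det
      = ∏ i ∈ Finset.range n, (i ! : ℚ) := by
  rw [Matrix.det_vandermonde_add (fun i : Fin n => (i : ℚ)) c]
  cases n with
  | zero => simp
  | succ m =>
    rw [Matrix.det_vandermonde_id_eq_superFactorial m, ← Nat.prod_range_succ_factorial m]
    push_cast
    rfl

theorem stmt_0 (s t n : ℕ) :
    (Matrix.of fun i j : Fin n =>
      (((i : ℕ) + j + s + t).choose ((i : ℕ) + s) : ℚ)).det =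
    ∏ k ∈ Finset.range s,
      (((n + k + t).choose t : ℚ) / ((k + t).choose t : ℚ)) := by
  have factne : ∀ m : ℕ, (m ! : ℚ) ≠ 0 := fun m => by
    exact_mod_cast m.factorial_ne_zero
  set p : Fin n → ℚ[X] := fun j => ∏ l ∈ Finset.range j, (X + C ((l : ℚ) + 1)) with hp
  have hdeg : ∀ j : Fin n, (p j).natDegree = j := by
    intro j
    have hpj : p j = ∏ l ∈ Finset.range (j : ℕ), (X + C ((l : ℚ) + 1)) := rfl
    rw [hpj]
    rw [Polynomial.natDegree_prod_of_monic (Finset.range (j : ℕ)) _ (fun l _ => monic_X_add_C _)]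
    simp only [natDegree_X_add_C]
    simp
  have hmon : ∀ j : Fin n, (p j).Monic := fun j =>
    monic_prod_of_monic _ _ fun l _ => monic_X_add_C _
  -- entrywise identity
  have entry : ∀ i j : Fin n,
      (((i : ℕ) + j + s + t).choose ((i : ℕ) + s) : ℚ)
        = (((i : ℕ) + s + t)! : ℚ) / (((i : ℕ) + s)! : ℚ) *
          ((1 / (((j : ℕ) + t)! : ℚ)) * (p j).eval ((i : ℚ) + (s + t))) := by
    intro i j
    have hle : (i : ℕ) + s ≤ (i : ℕ) + j + s + t := by omega
    rw [Nat.cast_choose ℚ hle]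
    have hsub : (i : ℕ) + j + s + t - ((i : ℕ) + s) = (j : ℕ) + t := by omega
    rw [hsub]
    have heval : (p j).eval ((i : ℚ) + (s + t)) =
        ∏ l ∈ Finset.range j, ((i : ℚ) + (s + t) + l + 1) := by
      rw [hp]; rw [Polynomial.eval_prod]; simp [add_assoc]
    have hfact : ((((i : ℕ) + s + t) + (j : ℕ))! : ℚ)
        = (((i : ℕ) + s + t)! : ℚ) * ∏ l ∈ Finset.range j, ((i : ℚ) + (s + t) + l + 1) := by
      rw [fact_add_eq ((i : ℕ) + s + t) (j : ℕ)]
      congr 1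
      refine Finset.prod_congr rfl fun l _ => by push_cast; ring
    have harg : (i : ℕ) + j + s + t = ((i : ℕ) + s + t) + (j : ℕ) := by omega
    rw [harg, hfact, heval]
    field_simp
  have hM : (Matrix.of fun i j : Fin n =>
      (((i : ℕ) + j + s + t).choose ((i : ℕ) + s) : ℚ))
      = Matrix.of fun i j : Fin n =>
        ((((i : ℕ) + s + t)! : ℚ) / (((i : ℕ) + s)! : ℚ)) *
          ((Matrix.of fun i j : Fin n =>
            (1 / (((j : ℕ) + t)! : ℚ)) * ((Matrix.of fun i j : Fin n =>
              (p j).eval ((i : ℚ) + (s + t))) i j)) i j) := by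
    ext i j
    simpa using entry i j
  rw [hM, Matrix.det_mul_column, Matrix.det_mul_row,
    ← Matrix.det_eval_matrixOfPolynomials_eq_det_vandermonde
      (fun i : Fin n => (i : ℚ) + (s + t)) p hdeg hmon,
    vdm_det n ((s : ℚ) + t)]
  -- now pure product identity
  rw [Fin.prod_univ_eq_prod_range (fun i => ((i + s + t)! : ℚ) / ((i + s)! : ℚ)) n,
    Fin.prod_univ_eq_prod_range (fun j => 1 / ((j + t)! : ℚ)) n]
  have lhs_eq : (∏ i ∈ range n, ((i + s + t)! : ℚ) / ((i + s)! : ℚ)) *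
      ((∏ j ∈ range n, 1 / ((j + t)! : ℚ)) * ∏ i ∈ range n, (i ! : ℚ))
      = ∏ i ∈ range n, ∏ k ∈ range s, (((i : ℚ) + t + k + 1) / ((i : ℚ) + k + 1)) := by
    rw [← Finset.prod_mul_distrib, ← Finset.prod_mul_distrib]
    refine Finset.prod_congr rfl fun i _ => ?_
    have h1 : ((i + s + t)! : ℚ) = ((i + t)! : ℚ) * ∏ k ∈ range s, ((i : ℚ) + t + k + 1) := by
      have := fact_add_eq (i + t) s
      rw [show i + s + t = i + t + s by omega, this]
      congr 1
      exact Finset.prod_congr rfl fun k _ => by push_cast; ring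
    have h2 : ((i + s)! : ℚ) = (i ! : ℚ) * ∏ k ∈ range s, ((i : ℚ) + k + 1) := by
      have := fact_add_eq i s
      rw [this]
    rw [h1, h2, Finset.prod_div_distrib]
    have hne1 : (∏ k ∈ range s, ((i : ℚ) + k + 1)) ≠ 0 :=
      Finset.prod_ne_zero_iff.2 fun k _ => by positivity
    field_simp
  rw [lhs_eq, Finset.prod_comm]
  refine Finset.prod_congr rfl fun k _ => ?_
  rw [Finset.prod_div_distrib]
  have hA : (∏ i ∈ range n, ((i : ℚ) + t + k + 1)) = ((k + t + n)! : ℚ) / ((k + t)! : ℚ) := by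
    rw [fact_add_eq (k + t) n]
    rw [eq_div_iff (factne (k + t))]
    rw [mul_comm]
    refine congrArg _ (Finset.prod_congr rfl fun i _ => ?_)
    push_cast; ring
  have hB : (∏ i ∈ range n, ((i : ℚ) + k + 1)) = ((k + n)! : ℚ) / (k ! : ℚ) := by
    rw [fact_add_eq k n]
    rw [eq_div_iff (factne k)]
    rw [mul_comm]
    refine congrArg _ (Finset.prod_congr rfl fun i _ => ?_)
    ring
  rw [hA, hB]
  rw [Nat.cast_choose ℚ (show t ≤ n + k + t by omega),
    Nat.cast_choose ℚ (show t ≤ k + t by omega)]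
  rw [show n + k + t - t = n + k by omega, show k + t - t = k by omega]
  rw [show n + k + t = k + t + n by omega, show k + n = n + k by omega]
  field_simp
end

section
/- The determinant of the n×n matrix with entries (i+j+k)! for 0 ≤ i,j < n equals the product over i from 0 to n-1 of i!·(i+k)!. -/
open Finset Matrix

lemma aux_sum (i j k : ℕ) :
    ∑ l ∈ Finset.range (j + 1), Nat.choose i l * Nat.choose (j + k) (j - l) =
      Nat.choose (i + (j + k)) j := by
  rw [Nat.add_choose_eq, Finset.Nat.sum_antidiagonal_eq_sum_range_succ_mk]

lemma aux_fact (i j k : ℕ) :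
    Nat.factorial (i + k) * Nat.factorial j * Nat.choose (i + j + k) j =
      Nat.factorial (i + j + k) := by
  have h := Nat.choose_mul_factorial_mul_factorial (show j ≤ i + j + k by omega)
  have e : i + j + k - j = i + k := by omega
  rw [e] at h
  linarith [h]

theorem stmt_1 (k n : ℕ) :
    (Matrix.of fun i j : Fin n =>
      ((Nat.factorial ((i : ℕ) + j + k) : ℤ))).det =
    ∏ i ∈ Finset.range n,
      (Nat.factorial i : ℤ) * (Nat.factorial (i + k) : ℤ) := by
  set B : Matrix (Fin n) (Fin n) ℤ :=
    Matrix.of fun i l : Fin n =>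
      ((Nat.factorial ((i : ℕ) + k) * Nat.choose (i : ℕ) (l : ℕ) : ℕ) : ℤ) with hB
  set C : Matrix (Fin n) (Fin n) ℤ :=
    Matrix.of fun l j : Fin n =>
      if (l : ℕ) ≤ (j : ℕ) then
        ((Nat.factorial (j : ℕ) * Nat.choose ((j : ℕ) + k) ((j : ℕ) - (l : ℕ)) : ℕ) : ℤ)
      else 0 with hC
  have hmul : (Matrix.of fun i j : Fin n =>
      ((Nat.factorial ((i : ℕ) + j + k) : ℤ))) = B * C := by
    ext i j
    simp only [Matrix.mul_apply, hB, hC, Matrix.of_apply]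
    rw [Fin.sum_univ_eq_sum_range
      (fun l => ((Nat.factorial ((i : ℕ) + k) * Nat.choose (i : ℕ) l : ℕ) : ℤ) *
        (if l ≤ (j : ℕ) then
          ((Nat.factorial (j : ℕ) * Nat.choose ((j : ℕ) + k) ((j : ℕ) - l) : ℕ) : ℤ) else 0))]
    rw [← Finset.sum_subset (Finset.range_subset_range.2 (show (j : ℕ) + 1 ≤ n from j.2))
      (by intro x _ hx
          simp only [Finset.mem_range, Nat.lt_succ_iff] at hx
          rw [if_neg hx, mul_zero])]
    have : ∀ l ∈ Finset.range ((j : ℕ) + 1),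
        ((Nat.factorial ((i : ℕ) + k) * Nat.choose (i : ℕ) l : ℕ) : ℤ) *
        (if l ≤ (j : ℕ) then
          ((Nat.factorial (j : ℕ) * Nat.choose ((j : ℕ) + k) ((j : ℕ) - l) : ℕ) : ℤ) else 0) =
        ((Nat.factorial ((i : ℕ) + k) * Nat.choose (i : ℕ) l *
          (Nat.factorial (j : ℕ) * Nat.choose ((j : ℕ) + k) ((j : ℕ) - l)) : ℕ) : ℤ) := by
      intro l hl
      rw [if_pos (Nat.lt_succ_iff.1 (Finset.mem_range.1 hl))]
      push_cast; ring
    rw [Finset.sum_congr rfl this, ← Nat.cast_sum]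
    congr 1
    symm
    calc ∑ l ∈ Finset.range ((j : ℕ) + 1),
          Nat.factorial ((i : ℕ) + k) * Nat.choose (i : ℕ) l *
            (Nat.factorial (j : ℕ) * Nat.choose ((j : ℕ) + k) ((j : ℕ) - l))
        = Nat.factorial ((i : ℕ) + k) * Nat.factorial (j : ℕ) *
            ∑ l ∈ Finset.range ((j : ℕ) + 1),
              Nat.choose (i : ℕ) l * Nat.choose ((j : ℕ) + k) ((j : ℕ) - l) := by
          rw [Finset.mul_sum]; exact Finset.sum_congr rfl fun l _ => by ring
      _ = Nat.factorial ((i : ℕ) + j + k) := by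
          rw [aux_sum]
          have : (i : ℕ) + ((j : ℕ) + k) = (i : ℕ) + (j : ℕ) + k := by omega
          rw [this, aux_fact]
  rw [hmul, Matrix.det_mul]
  have hBdet : B.det = ∏ i : Fin n, ((Nat.factorial ((i : ℕ) + k) : ℤ)) := by
    rw [Matrix.det_of_lowerTriangular B (fun i j hij => by
      have h2 : (i : ℕ) < (j : ℕ) := hij
      simp only [hB, Matrix.of_apply]
      rw [Nat.choose_eq_zero_of_lt h2, mul_zero, Nat.cast_zero])]
    exact Finset.prod_congr rfl fun i _ => by
      simp [hB, Nat.choose_self]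
  have hCdet : C.det = ∏ i : Fin n, ((Nat.factorial (i : ℕ) : ℤ)) := by
    rw [Matrix.det_of_upperTriangular (show C.BlockTriangular id from fun i j hij => by
      have h2 : (j : ℕ) < (i : ℕ) := hij
      simp only [hC, Matrix.of_apply]
      rw [if_neg (by omega)])]
    exact Finset.prod_congr rfl fun i _ => by
      simp [hC, Nat.sub_self]
  rw [hBdet, hCdet, ← Finset.prod_mul_distrib]
  rw [← Fin.prod_univ_eq_prod_range
    (fun i => (Nat.factorial i : ℤ) * (Nat.factorial (i + k) : ℤ))]
  exact Finset.prod_congr rfl fun i _ => by ring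
end

section
/- Let A(n) be the n×n matrix defined recursively by a_{i,j} = a_{i-1,j} + a_{i,j-1} + α_i·β_j with the convention a_{i,-1} = a_{-1,j} = 0. Then the entry a_{i,j} equals the double sum ∑_{s=0}^{i} ∑_{t=0}^{j} α_{i-s}·β_{j-t}·C(s+t, s). -/
/-- Entries of the matrix defined by `a_{i,j} = a_{i-1,j} + a_{i,j-1} + α_i β_j`
with the convention that entries with index `-1` are `0`. -/
def aRec {R : Type*} [CommRing R] (α β : ℕ → R) : ℕ → ℕ → R
  | 0, 0 => α 0 * β 0
  | i + 1, 0 => aRec α β i 0 + α (i + 1) * β 0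
  | 0, j + 1 => aRec α β 0 j + α 0 * β (j + 1)
  | i + 1, j + 1 => aRec α β i (j + 1) + aRec α β (i + 1) j + α (i + 1) * β (j + 1)


open Finset


private lemma peelT {M : Type*} [AddCommMonoid M] (f : ℕ → ℕ → M) (m n : ℕ) :
    ∑ s ∈ range m, ∑ t ∈ range (n+1), f s t
    = (∑ s ∈ range m, ∑ t ∈ range n, f s (t+1)) + ∑ s ∈ range m, f s 0 := by
  simp only [Finset.sum_range_succ', Finset.sum_add_distrib]

private lemma peel2 {M : Type*} [AddCommMonoid M] (f : ℕ → ℕ → M) (m n : ℕ) :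
    ∑ s ∈ range (m+1), ∑ t ∈ range (n+1), f s t
    = (((∑ s ∈ range m, ∑ t ∈ range n, f (s+1) (t+1))
      + ∑ s ∈ range m, f (s+1) 0) + ∑ t ∈ range n, f 0 (t+1)) + f 0 0 := by
  rw [Finset.sum_range_succ']
  simp only [Finset.sum_range_succ', Finset.sum_add_distrib]
  abel

private lemma key {R : Type*} [CommRing R] (α β : ℕ → R) (i j : ℕ) :
    ∑ s ∈ range (i+2), ∑ t ∈ range (j+2), α (i+1-s) * β (j+1-t) * ((s+t).choose s : R)
    = (∑ s ∈ range (i+1), ∑ t ∈ range (j+2), α (i-s) * β (j+1-t) * ((s+t).choose s : R))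
    + (∑ s ∈ range (i+2), ∑ t ∈ range (j+1), α (i+1-s) * β (j-t) * ((s+t).choose s : R))
    + α (i+1) * β (j+1) := by
  rw [show i+2 = (i+1)+1 from rfl, show j+2 = (j+1)+1 from rfl,
    peel2 (fun s t => α (i+1-s) * β (j+1-t) * ((s+t).choose s : R)) (i+1) (j+1),
    peelT (fun s t => α (i-s) * β (j+1-t) * ((s+t).choose s : R)) (i+1) (j+1),
    Finset.sum_range_succ' (fun s => ∑ t ∈ range (j+1), α (i+1-s) * β (j-t) * ((s+t).choose s : R)) (i+1)]
  simp only [Nat.succ_sub_succ, Nat.add_sub_cancel, Nat.sub_zero, Nat.sub_self,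
    show ∀ s t : ℕ, ((s+1)+(t+1)).choose (s+1) = (s+t+1).choose s + (s+t+1).choose (s+1) from
      fun s t => by rw [show (s+1)+(t+1) = (s+t+1)+1 from by omega, Nat.choose_succ_succ'],
    show ∀ s t : ℕ, (s+(t+1)).choose s = (s+t+1).choose s from
      fun s t => by rw [Nat.add_assoc],
    show ∀ s t : ℕ, ((s+1)+t).choose (s+1) = (s+t+1).choose (s+1) from
      fun s t => by rw [show (s+1)+t = s+t+1 from by omega],
    Nat.choose_self, Nat.choose_zero_right, Nat.cast_one, mul_one,
    Nat.cast_add, mul_add, Finset.sum_add_distrib, Nat.zero_add, Nat.add_zero, Nat.zero_sub]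
  abel


theorem stmt_5 {R : Type*} [CommRing R] (α β : ℕ → R) (i j : ℕ) :
    aRec α β i j =
      ∑ s ∈ Finset.range (i + 1), ∑ t ∈ Finset.range (j + 1),
        α (i - s) * β (j - t) * ((s + t).choose s : R) := by
  induction i generalizing j with
  | zero =>
    induction j with
    | zero => simp [aRec]
    | succ j ihj =>
      rw [show aRec α β 0 (j+1) = aRec α β 0 j + α 0 * β (j+1) from by rw [aRec], ihj]
      simp only [Finset.sum_range_one, Nat.zero_sub, Nat.zero_add, Nat.choose_zero_right,
        Nat.cast_one, mul_one, Nat.sub_zero]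
      rw [Finset.sum_range_succ' (fun t => α 0 * β (j+1-t)) (j+1)]
      simp [Nat.succ_sub_succ]
  | succ i ih =>
    induction j with
    | zero =>
      rw [show aRec α β (i+1) 0 = aRec α β i 0 + α (i+1) * β 0 from by rw [aRec], ih 0]
      simp only [Nat.zero_add, Nat.reduceAdd, Finset.sum_range_one, Nat.add_zero, Nat.choose_self, Nat.cast_one, mul_one,
        Nat.sub_zero]
      rw [Finset.sum_range_succ' (fun s => α (i+1-s) * β 0) (i+1)]
      simp [Nat.succ_sub_succ]
    | succ j ihj =>
      rw [show aRec α β (i+1) (j+1)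
          = aRec α β i (j+1) + aRec α β (i+1) j + α (i+1) * β (j+1) from by rw [aRec],
        ih (j+1), ihj]
      exact (key α β i j).symm
end

section
/- Let A(n) be the n×n matrix defined recursively by a_{i,j} = a_{i-1,j} + a_{i,j-1} + α_i·β_j (with a_{i,-1} = a_{-1,j} = 0). Then det(A(n)) = (α_0·β_0)^n. -/
open Matrix


/-- The lower-triangular factor: `uRec α i k = ∑_{p ≤ i} C(i-p, k) α_p`, defined recursively. -/
def uRec {R : Type*} [CommRing R] (α : ℕ → R) : ℕ → ℕ → R
  | 0, 0 => α 0
  | 0, _ + 1 => 0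
  | i + 1, 0 => uRec α i 0 + α (i + 1)
  | i + 1, k + 1 => uRec α i (k + 1) + uRec α i k

lemma uRec_eq_zero {R : Type*} [CommRing R] (α : ℕ → R) :
    ∀ i k, i < k → uRec α i k = 0 := by
  intro i
  induction i with
  | zero => intro k hk; match k, hk with | k + 1, _ => rfl
  | succ i ih =>
    intro k hk
    match k, hk with
    | k + 1, hk =>
      have h1 : i < k + 1 := by omega
      have h2 : i < k := by omega
      simp [uRec, ih _ h1, ih _ h2]

lemma uRec_diag {R : Type*} [CommRing R] (α : ℕ → R) : ∀ i, uRec α i i = α 0 := by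
  intro i
  induction i with
  | zero => rfl
  | succ i ih => simp [uRec, ih, uRec_eq_zero α i (i + 1) (by omega)]

lemma tail_shift {R : Type*} [CommRing R] (α β : ℕ → R) (i j M : ℕ) (hi : i < M) :
    ∑ k ∈ Finset.range M, uRec α i k * uRec β j k =
      (∑ k ∈ Finset.range M, uRec α i (k + 1) * uRec β j (k + 1)) +
        uRec α i 0 * uRec β j 0 := by
  have h1 := Finset.sum_range_succ' (fun k => uRec α i k * uRec β j k) M
  have h2 := Finset.sum_range_succ (fun k => uRec α i k * uRec β j k) M
  rw [uRec_eq_zero α i M hi] at h2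
  linear_combination h1 - h2

lemma key_s6 {R : Type*} [CommRing R] (α β : ℕ → R) :
    ∀ i j N, i < N → j < N →
      (∑ k ∈ Finset.range N, uRec α i k * uRec β j k) = aRec α β i j := by
  intro i
  induction i with
  | zero =>
    intro j
    induction j with
    | zero =>
      intro N hN _
      obtain ⟨M, rfl⟩ : ∃ M, N = M + 1 := ⟨N - 1, by omega⟩
      rw [Finset.sum_range_succ']
      simp [uRec, aRec]
    | succ j ihj =>
      intro N h0 hj
      obtain ⟨M, rfl⟩ : ∃ M, N = M + 1 := ⟨N - 1, by omega⟩
      have hj' : j < M + 1 := by omega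
      rw [show aRec α β 0 (j + 1) = aRec α β 0 j + α 0 * β (j + 1) by rw [aRec],
        ← ihj (M + 1) h0 hj']
      rw [Finset.sum_range_succ', Finset.sum_range_succ']
      simp [uRec]
      ring
  | succ i ihi =>
    intro j
    induction j with
    | zero =>
      intro N hi _
      obtain ⟨M, rfl⟩ : ∃ M, N = M + 1 := ⟨N - 1, by omega⟩
      have hi' : i < M + 1 := by omega
      rw [show aRec α β (i + 1) 0 = aRec α β i 0 + α (i + 1) * β 0 by rw [aRec],
        ← ihi 0 (M + 1) hi' (by omega)]
      rw [Finset.sum_range_succ', Finset.sum_range_succ']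
      have : ∀ k ∈ Finset.range M,
          uRec α (i + 1) (k + 1) * uRec β 0 (k + 1) = uRec α i (k + 1) * uRec β 0 (k + 1) := by
        intro k _
        simp [show uRec β 0 (k + 1) = 0 by rw [uRec]]
      rw [Finset.sum_congr rfl this]
      simp [uRec]
      ring
    | succ j ihj =>
      intro N hi hj
      obtain ⟨M, rfl⟩ : ∃ M, N = M + 1 := ⟨N - 1, by omega⟩
      have hiM : i < M := by omega
      have hjM : j < M := by omega
      rw [show aRec α β (i + 1) (j + 1)
            = aRec α β i (j + 1) + aRec α β (i + 1) j + α (i + 1) * β (j + 1) by rw [aRec],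
        ← ihi (j + 1) (M + 1) (by omega) (by omega),
        ← ihj (M + 1) (by omega) (by omega)]
      rw [Finset.sum_range_succ', Finset.sum_range_succ', Finset.sum_range_succ']
      have e1 : ∀ k ∈ Finset.range M,
          uRec α (i + 1) (k + 1) * uRec β (j + 1) (k + 1)
            = uRec α i (k + 1) * uRec β j (k + 1) + uRec α i (k + 1) * uRec β j k
              + uRec α i k * uRec β j (k + 1) + uRec α i k * uRec β j k := by
        intro k _; simp only [uRec]; ring
      have e2 : ∀ k ∈ Finset.range M,
          uRec α i (k + 1) * uRec β (j + 1) (k + 1)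
            = uRec α i (k + 1) * uRec β j (k + 1) + uRec α i (k + 1) * uRec β j k := by
        intro k _; simp only [uRec]; ring
      have e3 : ∀ k ∈ Finset.range M,
          uRec α (i + 1) (k + 1) * uRec β j (k + 1)
            = uRec α i (k + 1) * uRec β j (k + 1) + uRec α i k * uRec β j (k + 1) := by
        intro k _; simp only [uRec]; ring
      rw [Finset.sum_congr rfl e1, Finset.sum_congr rfl e2, Finset.sum_congr rfl e3]
      simp only [Finset.sum_add_distrib]
      have := tail_shift α β i j M hiM
      rw [show uRec α (i + 1) 0 = uRec α i 0 + α (i + 1) by rw [uRec],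
        show uRec β (j + 1) 0 = uRec β j 0 + β (j + 1) by rw [uRec]]
      linear_combination this

theorem stmt_6 {R : Type*} [CommRing R] (α β : ℕ → R) (n : ℕ) :
    (Matrix.of fun i j : Fin n => aRec α β i j).det = (α 0 * β 0) ^ n := by
  set U : Matrix (Fin n) (Fin n) R := Matrix.of fun i k : Fin n => uRec α i k with hU
  set V : Matrix (Fin n) (Fin n) R := Matrix.of fun j k : Fin n => uRec β j k with hV
  have hfact : (Matrix.of fun i j : Fin n => aRec α β i j) = U * Vᵀ := by
    ext i j
    simp only [Matrix.mul_apply, Matrix.transpose_apply, hU, hV, Matrix.of_apply]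
    rw [← key_s6 α β i j n i.2 j.2, ← Fin.sum_univ_eq_sum_range]
  have hUtri : U.BlockTriangular OrderDual.toDual := by
    intro i k h
    exact uRec_eq_zero α i k (by exact_mod_cast h)
  have hVtri : V.BlockTriangular OrderDual.toDual := by
    intro j k h
    exact uRec_eq_zero β j k (by exact_mod_cast h)
  rw [hfact, Matrix.det_mul, Matrix.det_transpose,
    Matrix.det_of_lowerTriangular U hUtri, Matrix.det_of_lowerTriangular V hVtri]
  simp [hU, hV, uRec_diag, mul_pow]
end

section
/- Let P be the generalized Pascal matrix with first column α, first row β (where α_0 = β_0 = γ_0), and interior entries p_{i,j} = p_{i-1,j} + p_{i,j-1}. Then p_{i,j} = γ_0·C(i+j,i) + ∑_{s=1}^{i} (α_s − α_{s-1})·C(i−s+j, j) + ∑_{t=1}^{j} (β_t − β_{t-1})·C(i+j−t, i). -/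
/-- Entries of the generalized Pascal triangle with first column `α`, first row `β`
and the Pascal recursion rule in the interior. -/
def pascalRec {R : Type*} [CommRing R] (α β : ℕ → R) : ℕ → ℕ → R
  | i, 0 => α i
  | 0, j + 1 => β (j + 1)
  | i + 1, j + 1 => pascalRec α β i (j + 1) + pascalRec α β (i + 1) j

lemma tel {R : Type*} [CommRing R] (f : ℕ → R) (i : ℕ) :
    ∑ s ∈ Finset.Icc 1 i, (f s - f (s - 1)) = f i - f 0 := by
  induction i with
  | zero => simp
  | succ n ih => rw [Finset.sum_Icc_succ_top (by omega), ih]; simp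

theorem stmt_7 {R : Type*} [CommRing R] (α β : ℕ → R) (γ₀ : R)
    (hα : α 0 = γ₀) (hβ : β 0 = γ₀) (i j : ℕ) :
    pascalRec α β i j =
      γ₀ * ((i + j).choose i : R) +
      (∑ s ∈ Finset.Icc 1 i, (α s - α (s - 1)) * ((i - s + j).choose j : R)) +
      (∑ t ∈ Finset.Icc 1 j, (β t - β (t - 1)) * ((i + j - t).choose i : R)) := by
  induction i, j using pascalRec.induct with
  | case1 i =>
      simp only [pascalRec, Nat.add_zero, Nat.choose_self, Nat.choose_zero_right,
        Nat.cast_one, mul_one]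
      rw [show Finset.Icc 1 0 = (∅ : Finset ℕ) from rfl, Finset.sum_empty, tel, hα]
      ring
  | case2 j =>
      simp only [pascalRec, Nat.zero_add, Nat.choose_zero_right, Nat.cast_one, mul_one]
      rw [show Finset.Icc 1 0 = (∅ : Finset ℕ) from rfl, Finset.sum_empty, tel, hβ]
      ring
  | case3 i j ih1 ih2 =>
      rw [pascalRec, ih1, ih2]
      have hγ : ((i + 1 + (j + 1)).choose (i + 1) : R)
          = ((i + (j + 1)).choose i : R) + ((i + 1 + j).choose (i + 1) : R) := by
        rw [show i + 1 + (j + 1) = (i + (j+1)) + 1 by ring, Nat.choose_succ_succ]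
        push_cast
        rw [show i + 1 + j = i + (j + 1) by ring]
      have hs : ∑ s ∈ Finset.Icc 1 (i+1), (α s - α (s-1)) * (((i+1) - s + (j+1)).choose (j+1) : R)
          = (∑ s ∈ Finset.Icc 1 i, (α s - α (s-1)) * ((i - s + (j+1)).choose (j+1) : R))
          + (∑ s ∈ Finset.Icc 1 (i+1), (α s - α (s-1)) * (((i+1) - s + j).choose j : R)) := by
        rw [Finset.sum_Icc_succ_top (by omega : 1 ≤ i + 1),
            Finset.sum_Icc_succ_top (by omega : 1 ≤ i + 1)]
        simp only [Nat.sub_self, Nat.add_sub_cancel_left, Nat.zero_add,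
          Nat.choose_self, Nat.cast_one, mul_one]
        rw [← add_assoc]
        congr 1
        rw [← Finset.sum_add_distrib]
        apply Finset.sum_congr rfl
        intro s hsm
        have h1 : s ≤ i := by simp at hsm; omega
        have h2 : (i+1) - s + (j+1) = (i - s + (j+1)) + 1 := by omega
        have h3 : (i+1) - s + j = i - s + (j+1) := by omega
        rw [h2, h3, Nat.choose_succ_succ]
        push_cast
        ring
      have ht : ∑ t ∈ Finset.Icc 1 (j+1), (β t - β (t-1)) * (((i+1) + (j+1) - t).choose (i+1) : R)
          = (∑ t ∈ Finset.Icc 1 (j+1), (β t - β (t-1)) * ((i + (j+1) - t).choose i : R))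
          + (∑ t ∈ Finset.Icc 1 j, (β t - β (t-1)) * (((i+1) + j - t).choose (i+1) : R)) := by
        rw [Finset.sum_Icc_succ_top (by omega : 1 ≤ j + 1),
            Finset.sum_Icc_succ_top (by omega : 1 ≤ j + 1)]
        have e1 : (i+1) + (j+1) - (j+1) = i + 1 := by omega
        have e2 : i + (j+1) - (j+1) = i := by omega
        rw [e1, e2]
        simp only [Nat.choose_self, Nat.cast_one, mul_one]
        conv_rhs => rw [add_right_comm]
        congr 1
        rw [← Finset.sum_add_distrib]
        apply Finset.sum_congr rfl
        intro t htm
        have h1 : t ≤ j := by simp at htm; omega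
        have h2 : (i+1) + (j+1) - t = (i + (j+1) - t) + 1 := by omega
        have h3 : (i+1) + j - t = i + (j+1) - t := by omega
        rw [h2, h3, Nat.choose_succ_succ]
        push_cast
        ring
      rw [hγ, hs, ht]
      ring
end

section
/- Let α be any sequence with α_0 = 1 and let β be the constant sequence (1,1,1,…). Then the generalized Pascal matrix P_{α,β}(n) has determinant 1 for all n ≥ 1. -/
namespace PascalAux

variable {R : Type*} [CommRing R]

lemma pr_zero (α β : ℕ → R) (i : ℕ) : pascalRec α β i 0 = α i := by rw [pascalRec]

lemma pr_row0 (α β : ℕ → R) (j : ℕ) : pascalRec α β 0 (j + 1) = β (j + 1) := by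
  rw [pascalRec]

lemma pr_succ (α β : ℕ → R) (i j : ℕ) :
    pascalRec α β (i + 1) (j + 1) = pascalRec α β i (j + 1) + pascalRec α β (i + 1) j := by
  rw [pascalRec]

/-- Column differences of the Pascal matrix. -/
def dcol (α : ℕ → R) : ℕ → ℕ → R
  | i, 0 => α i
  | i, j + 1 => pascalRec α (fun _ => 1) i (j + 1) - pascalRec α (fun _ => 1) i j

lemma dcol_zero (α : ℕ → R) (i : ℕ) : dcol α i 0 = α i := by rw [dcol]

lemma dcol_succ (α : ℕ → R) (i j : ℕ) :
    dcol α i (j + 1) = pascalRec α (fun _ => 1) i (j + 1) - pascalRec α (fun _ => 1) i j := by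
  rw [dcol]

lemma pascalRec_row0 (α : ℕ → R) (hα : α 0 = 1) : ∀ j, pascalRec α (fun _ => 1) 0 j = 1
  | 0 => by rw [pr_zero]; exact hα
  | j + 1 => by rw [pr_row0]

lemma dcol_zero_succ (α : ℕ → R) (hα : α 0 = 1) (j : ℕ) : dcol α 0 (j + 1) = 0 := by
  rw [dcol_succ, pascalRec_row0 α hα, pascalRec_row0 α hα, sub_self]

lemma dcol_succ_succ (α : ℕ → R) (i j : ℕ) :
    dcol α (i + 1) (j + 1) = pascalRec α (fun _ => 1) i (j + 1) := by
  rw [dcol_succ, pr_succ]; ring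

lemma sum_dcol (α : ℕ → R) (i : ℕ) :
    ∀ k, (∑ j ∈ Finset.range (k + 1), dcol α i j) = pascalRec α (fun _ => 1) i k
  | 0 => by simp [dcol_zero, pr_zero]
  | k + 1 => by
      rw [Finset.sum_range_succ, sum_dcol α i k, dcol_succ]
      ring

lemma pascalRec_shift (α : ℕ → R) : ∀ i j,
    pascalRec (fun k => pascalRec α (fun _ => 1) k 1) (fun _ => 1) i j
      = pascalRec α (fun _ => 1) i (j + 1) := by
  intro i
  induction i with
  | zero =>
    intro j
    cases j with
    | zero => rw [pr_zero]
    | succ j => rw [pr_row0, pr_row0]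
  | succ i ih =>
    intro j
    induction j with
    | zero => rw [pr_zero]
    | succ j ihj =>
      rw [pr_succ, ih (j + 1), ihj, ← pr_succ]

lemma key (n : ℕ) : ∀ (α : ℕ → R), α 0 = 1 →
    (Matrix.of fun i j : Fin (n + 1) => pascalRec α (fun _ => 1) i j).det = 1 := by
  induction n with
  | zero =>
    intro α hα
    rw [Matrix.det_fin_one]
    show pascalRec α (fun _ => 1) 0 0 = 1
    rw [pr_zero]; exact hα
  | succ n ih =>
    intro α hα
    set β : ℕ → R := fun _ => 1 with hβ
    set E : Matrix (Fin (n + 2)) (Fin (n + 2)) R :=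
      Matrix.of fun i j => if (i : ℕ) ≤ (j : ℕ) then 1 else 0 with hE
    set N : Matrix (Fin (n + 2)) (Fin (n + 2)) R :=
      Matrix.of fun i j => dcol α i j with hN
    have hfact : (Matrix.of fun i j : Fin (n + 2) => pascalRec α β i j) = N * E := by
      ext i k
      show pascalRec α β i k = ∑ x : Fin (n + 2), N i x * E x k
      have hstep : ∀ x : Fin (n + 2),
          N i x * E x k = (fun j : ℕ => if j ≤ (k : ℕ) then dcol α i j else 0) x := by
        intro x
        simp only [hN, hE, Matrix.of_apply, mul_ite, mul_one, mul_zero]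
      rw [Finset.sum_congr rfl fun x _ => hstep x,
        Fin.sum_univ_eq_sum_range (fun j : ℕ => if j ≤ (k : ℕ) then dcol α i j else 0),
        ← Finset.sum_subset (Finset.range_subset_range.mpr (by omega : (k : ℕ) + 1 ≤ n + 2))
          (fun x _ hx => by
            rw [if_neg]
            simp only [Finset.mem_range] at hx
            omega),
        Finset.sum_congr rfl (fun x hx => if_pos (by
          simp only [Finset.mem_range] at hx; omega)),
        sum_dcol α i (k : ℕ)]
    have hEdet : E.det = 1 := by
      rw [Matrix.det_of_upperTriangular (M := E) (fun i j hij => by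
        simp only [hE, Matrix.of_apply]
        exact if_neg (not_le.mpr hij))]
      simp [hE]
    rw [hfact, Matrix.det_mul, hEdet, mul_one]
    rw [Matrix.det_succ_row_zero]
    rw [Fintype.sum_eq_single (0 : Fin (n + 2)) (fun j hj => by
      obtain ⟨j', rfl⟩ := Fin.exists_succ_eq.mpr hj
      have : N 0 j'.succ = 0 := by
        show dcol α ((0 : Fin (n + 2)) : ℕ) ((j'.succ : Fin (n + 2)) : ℕ) = 0
        rw [Fin.val_succ, Fin.val_zero, dcol_zero_succ α hα]
      rw [this]
      ring)]
    have h00 : N 0 0 = 1 := by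
      show dcol α ((0 : Fin (n + 2)) : ℕ) ((0 : Fin (n + 2)) : ℕ) = 1
      rw [Fin.val_zero, dcol_zero]; exact hα
    rw [h00]
    have hsub : (N.submatrix Fin.succ ((0 : Fin (n + 2)).succAbove))
        = Matrix.of fun i j : Fin (n + 1) =>
            pascalRec (fun k => pascalRec α β k 1) (fun _ => 1) i j := by
      ext i j
      show dcol α ((i.succ : Fin (n + 2)) : ℕ) (((0 : Fin (n + 2)).succAbove j : Fin (n + 2)) : ℕ) = _
      rw [Fin.succAbove_zero]
      show dcol α ((i : ℕ) + 1) ((j : ℕ) + 1) = _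
      rw [dcol_succ_succ]
      exact (pascalRec_shift α i j).symm
    rw [hsub, ih (fun k => pascalRec α β k 1) (pascalRec_row0 α hα 1)]
    simp

end PascalAux

theorem stmt_8 {R : Type*} [CommRing R] (α : ℕ → R) (hα : α 0 = 1) (n : ℕ) (hn : 1 ≤ n) :
    (Matrix.of fun i j : Fin n => pascalRec α (fun _ => 1) i j).det = 1 := by
  obtain ⟨m, rfl⟩ : ∃ m, n = m + 1 := ⟨n - 1, by omega⟩
  exact PascalAux.key m α hα
end

section
/- Let α = (1, A, A², …, A^k, …) and β = (1, B, B², …, B^k, …) be geometric sequences. Then the determinant of the generalized Pascal matrix P_{α,β}(n) equals (A + B − A·B)^{n−1} for all n ≥ 1. -/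
section Aux

open Finset Matrix

variable {R : Type*} [CommRing R] (A B : R)

local notation "pp" => pascalRec (fun k => A ^ k) (fun k => B ^ k)

lemma pasc_zero_right (i : ℕ) : pp i 0 = A ^ i := by simp [pascalRec]

lemma pasc_zero_left (j : ℕ) : pp 0 j = B ^ j := by
  cases j with
  | zero => simp [pascalRec]
  | succ j => simp [pascalRec]

lemma pasc_rec (i j : ℕ) :
    pp (i + 1) (j + 1) = pp i (j + 1) + pp (i + 1) j := by simp [pascalRec]

lemma pasc_base1 (i : ℕ) : pp (i + 1) 1 - A * pp i 1 = A + B - A * B := by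
  induction i with
  | zero =>
    have h : pp 1 1 = pp 0 1 + pp 1 0 := pasc_rec A B 0 0
    rw [h, pasc_zero_left, pasc_zero_right]
    ring
  | succ i ih =>
    have r : pp (i + 2) 1 = pp (i + 1) 1 + pp (i + 2) 0 := pasc_rec A B (i + 1) 0
    have r2 : pp (i + 1) 1 = pp i 1 + pp (i + 1) 0 := pasc_rec A B i 0
    rw [pasc_zero_right] at r r2
    rw [r, r2]; rw [r2] at ih
    linear_combination ih

lemma pasc_base2 (j : ℕ) : pp 1 (j + 1) - B * pp 1 j = A + B - A * B := by
  induction j with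
  | zero =>
    have h : pp 1 1 = pp 0 1 + pp 1 0 := pasc_rec A B 0 0
    rw [h, pasc_zero_left, pasc_zero_right]
    ring
  | succ j ih =>
    have r : pp 1 (j + 2) = pp 0 (j + 2) + pp 1 (j + 1) := pasc_rec A B 0 (j + 1)
    have r2 : pp 1 (j + 1) = pp 0 (j + 1) + pp 1 j := pasc_rec A B 0 j
    rw [pasc_zero_left] at r r2
    rw [r, r2]; rw [r2] at ih
    linear_combination ih

lemma pasc_key (i j : ℕ) :
    pp (i + 1) (j + 1) - A * pp i (j + 1) - B * pp (i + 1) j + A * B * pp i j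
      = (A + B - A * B) * ((i + j).choose i : R) := by
  induction i generalizing j with
  | zero =>
    cases j with
    | zero =>
      have h : pp 1 1 = pp 0 1 + pp 1 0 := pasc_rec A B 0 0
      rw [h]
      simp only [pasc_zero_left, pasc_zero_right]
      push_cast [Nat.choose_self]
      ring
    | succ j =>
      have h := pasc_base2 A B (j + 1)
      rw [pasc_zero_left, pasc_zero_left]
      push_cast [Nat.choose_zero_right]
      linear_combination h
  | succ i ih =>
    induction j with
    | zero =>
      have h := pasc_base1 A B (i + 1)
      rw [pasc_zero_right, pasc_zero_right]
      push_cast [Nat.choose_self]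
      linear_combination h
    | succ j ihj =>
      have r1 : pp (i + 2) (j + 2) = pp (i + 1) (j + 2) + pp (i + 2) (j + 1) :=
        pasc_rec A B (i + 1) (j + 1)
      have r2 : pp (i + 1) (j + 2) = pp i (j + 2) + pp (i + 1) (j + 1) :=
        pasc_rec A B i (j + 1)
      have r3 : pp (i + 2) (j + 1) = pp (i + 1) (j + 1) + pp (i + 2) j :=
        pasc_rec A B (i + 1) j
      have r4 : pp (i + 1) (j + 1) = pp i (j + 1) + pp (i + 1) j :=
        pasc_rec A B i j
      have h1 := ih (j + 1)
      have h2 := ihj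
      have hc : (i + 1 + (j + 1)).choose (i + 1)
          = (i + (j + 1)).choose i + (i + 1 + j).choose (i + 1) := by
        rw [show i + 1 + (j + 1) = (i + (j + 1)) + 1 by ring, Nat.choose_succ_succ]
        congr 2
        omega
      rw [hc]
      push_cast
      linear_combination r1 - A * r2 - B * r3 + A * B * r4 + h1 + h2

/-- Lower elimination matrix: identity plus `-A` on the subdiagonal. -/
def elimL (m : ℕ) : Matrix (Fin (m + 1)) (Fin (m + 1)) R :=
  Matrix.of fun i k =>
    (if i = k then (1 : R) else 0) + (if (k : ℕ) + 1 = (i : ℕ) then -A else 0)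

/-- Upper elimination matrix: identity plus `-B` on the superdiagonal. -/
def elimU (m : ℕ) : Matrix (Fin (m + 1)) (Fin (m + 1)) R :=
  Matrix.of fun l j =>
    (if l = j then (1 : R) else 0) + (if (l : ℕ) + 1 = (j : ℕ) then -B else 0)

lemma det_elimL (m : ℕ) : (elimL A m).det = 1 := by
  rw [Matrix.det_of_lowerTriangular _ (by
    intro i j h
    have hij : (i : ℕ) < (j : ℕ) := OrderDual.toDual_lt_toDual.mp h
    have h1 : ¬ i = j := fun hh => by simp [hh] at hij
    simp only [elimL, Matrix.of_apply, if_neg h1, zero_add, ite_eq_right_iff]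
    intro hh
    omega)]
  apply Finset.prod_eq_one
  intro i _
  simp [elimL]

lemma det_elimU (m : ℕ) : (elimU B m).det = 1 := by
  rw [Matrix.det_of_upperTriangular (by
    intro i j h
    have hij : (j : ℕ) < (i : ℕ) := (show j < i from h)
    have h1 : ¬ i = j := fun hh => by simp [hh] at hij
    simp only [elimU, Matrix.of_apply, if_neg h1, zero_add, ite_eq_right_iff]
    intro hh
    omega)]
  apply Finset.prod_eq_one
  intro i _
  simp [elimU]

lemma elimL_mul_zero (m : ℕ) (M : Matrix (Fin (m + 1)) (Fin (m + 1)) R)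
    (j : Fin (m + 1)) : (elimL A m * M) 0 j = M 0 j := by
  rw [Matrix.mul_apply]
  simp only [elimL, Matrix.of_apply, add_mul, ite_mul, one_mul, zero_mul,
    Finset.sum_add_distrib]
  rw [Finset.sum_ite_eq Finset.univ (0 : Fin (m + 1)) (fun k => M k j)]
  simp

lemma elimL_mul_succ (m : ℕ) (M : Matrix (Fin (m + 1)) (Fin (m + 1)) R)
    (i : Fin m) (j : Fin (m + 1)) :
    (elimL A m * M) i.succ j = M i.succ j - A * M i.castSucc j := by
  rw [Matrix.mul_apply]
  simp only [elimL, Matrix.of_apply, add_mul, ite_mul, one_mul, zero_mul,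
    Finset.sum_add_distrib]
  rw [Finset.sum_ite_eq Finset.univ (i.succ : Fin (m + 1)) (fun k => M k j)]
  have hcond : ∀ k : Fin (m + 1), ((k : ℕ) + 1 = ((i.succ : Fin (m + 1)) : ℕ))
      ↔ k = i.castSucc := by
    intro k
    rw [Fin.val_succ]
    constructor
    · intro h; exact Fin.ext (by simpa using Nat.succ_injective h)
    · intro h; subst h; simp
  simp only [hcond]
  rw [Finset.sum_ite_eq' Finset.univ (i.castSucc : Fin (m + 1)) (fun k => -A * M k j)]
  simp
  ring

lemma mul_elimU_zero (m : ℕ) (M : Matrix (Fin (m + 1)) (Fin (m + 1)) R)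
    (i : Fin (m + 1)) : (M * elimU B m) i 0 = M i 0 := by
  rw [Matrix.mul_apply]
  simp only [elimU, Matrix.of_apply, mul_add, mul_ite, mul_one, mul_zero,
    Finset.sum_add_distrib]
  rw [Finset.sum_ite_eq' Finset.univ (0 : Fin (m + 1)) (fun k => M i k)]
  simp

lemma mul_elimU_succ (m : ℕ) (M : Matrix (Fin (m + 1)) (Fin (m + 1)) R)
    (i : Fin (m + 1)) (j : Fin m) :
    (M * elimU B m) i j.succ = M i j.succ - B * M i j.castSucc := by
  rw [Matrix.mul_apply]
  simp only [elimU, Matrix.of_apply, mul_add, mul_ite, mul_one, mul_zero,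
    Finset.sum_add_distrib]
  rw [Finset.sum_ite_eq' Finset.univ (j.succ : Fin (m + 1)) (fun k => M i k)]
  have hcond : ∀ k : Fin (m + 1), ((k : ℕ) + 1 = ((j.succ : Fin (m + 1)) : ℕ))
      ↔ k = j.castSucc := by
    intro k
    rw [Fin.val_succ]
    constructor
    · intro h; exact Fin.ext (by simpa using Nat.succ_injective h)
    · intro h; subst h; simp
  simp only [hcond]
  rw [Finset.sum_ite_eq' Finset.univ (j.castSucc : Fin (m + 1)) (fun k => M i k * -B)]
  simp
  ring

lemma choose_sum_range (i j m : ℕ) (hi : i < m) :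
    ∑ k ∈ Finset.range m, i.choose k * j.choose k = (i + j).choose i := by
  rw [Nat.add_choose_eq, Finset.Nat.sum_antidiagonal_eq_sum_range_succ_mk]
  rw [← Finset.sum_subset (Finset.range_subset_range.2 hi)
    (fun k _ hk => by
      rw [Nat.choose_eq_zero_of_lt (by simpa using hk), zero_mul])]
  rw [← Finset.sum_range_reflect (fun a => i.choose a * j.choose (i - a)) (i + 1)]
  apply Finset.sum_congr rfl
  intro k hk
  have hk' : k ≤ i := Nat.lt_succ_iff.mp (Finset.mem_range.mp hk)
  have e1 : i + 1 - 1 - k = i - k := by omega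
  have e2 : i - (i - k) = k := by omega
  rw [e1, e2, Nat.choose_symm hk']

lemma det_binomial (m : ℕ) :
    (Matrix.of fun i j : Fin m => (((i : ℕ) + (j : ℕ)).choose (i : ℕ) : R)).det = 1 := by
  have hfac : (Matrix.of fun i j : Fin m => (((i : ℕ) + (j : ℕ)).choose (i : ℕ) : R))
      = (Matrix.of fun i k : Fin m => (((i : ℕ).choose (k : ℕ) : ℕ) : R))
        * (Matrix.of fun k j : Fin m => (((j : ℕ).choose (k : ℕ) : ℕ) : R)) := by
    ext i j
    rw [Matrix.mul_apply]
    simp only [Matrix.of_apply]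
    rw [← choose_sum_range (i : ℕ) (j : ℕ) m i.isLt,
      ← Fin.sum_univ_eq_sum_range (fun k => (i : ℕ).choose k * (j : ℕ).choose k),
      Nat.cast_sum]
    push_cast
    rfl
  rw [hfac, Matrix.det_mul]
  rw [Matrix.det_of_lowerTriangular _ (by
    intro i j h
    have hij : (i : ℕ) < (j : ℕ) := OrderDual.toDual_lt_toDual.mp h
    simp only [Matrix.of_apply]
    rw [Nat.choose_eq_zero_of_lt (by omega)]
    simp)]
  rw [Matrix.det_of_upperTriangular (by
    intro i j h
    have hij : (j : ℕ) < (i : ℕ) := (show j < i from h)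
    simp only [Matrix.of_apply]
    rw [Nat.choose_eq_zero_of_lt (by omega)]
    simp)]
  simp [Nat.choose_self]

end Aux

theorem stmt_10 {R : Type*} [CommRing R] (A B : R) (n : ℕ) (hn : 1 ≤ n) :
    (Matrix.of fun i j : Fin n =>
      pascalRec (fun k => A ^ k) (fun k => B ^ k) i j).det = (A + B - A * B) ^ (n - 1) := by
  obtain ⟨m, rfl⟩ : ∃ m, n = m + 1 := ⟨n - 1, by omega⟩
  set Pm : Matrix (Fin (m + 1)) (Fin (m + 1)) R := Matrix.of fun i j : Fin (m + 1) =>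
    pascalRec (fun k => A ^ k) (fun k => B ^ k) i j with hPm
  set E : Matrix (Fin (m + 1)) (Fin (m + 1)) R := elimL A m * (Pm * elimU B m) with hEdef
  have hdet : Pm.det = E.det := by
    rw [hEdef, Matrix.det_mul, Matrix.det_mul, det_elimL, det_elimU, one_mul, mul_one]
  have hE00 : E 0 0 = 1 := by
    rw [hEdef, elimL_mul_zero, mul_elimU_zero]
    show pascalRec _ _ ((0 : Fin (m + 1)) : ℕ) ((0 : Fin (m + 1)) : ℕ) = 1
    rw [Fin.val_zero, pasc_zero_right, pow_zero]
  have hE0succ : ∀ j : Fin m, E 0 j.succ = 0 := by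
    intro j
    rw [hEdef, elimL_mul_zero, mul_elimU_succ]
    show pascalRec _ _ ((0 : Fin (m + 1)) : ℕ) (j.succ : ℕ)
      - B * pascalRec _ _ ((0 : Fin (m + 1)) : ℕ) (j.castSucc : ℕ) = 0
    rw [Fin.val_zero, Fin.val_succ, Fin.coe_castSucc, pasc_zero_left, pasc_zero_left,
      pow_succ]
    ring
  have hEsub : E.submatrix Fin.succ Fin.succ
      = (A + B - A * B) • Matrix.of fun i j : Fin m =>
          (((i : ℕ) + (j : ℕ)).choose (i : ℕ) : R) := by
    ext i j
    rw [Matrix.submatrix_apply, hEdef, elimL_mul_succ, mul_elimU_succ, mul_elimU_succ]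
    show pascalRec _ _ (i.succ : ℕ) (j.succ : ℕ)
        - B * pascalRec _ _ (i.succ : ℕ) (j.castSucc : ℕ)
        - A * (pascalRec _ _ (i.castSucc : ℕ) (j.succ : ℕ)
          - B * pascalRec _ _ (i.castSucc : ℕ) (j.castSucc : ℕ)) = _
    rw [Fin.val_succ, Fin.val_succ, Fin.coe_castSucc, Fin.coe_castSucc]
    have h := pasc_key A B (i : ℕ) (j : ℕ)
    simp only [Matrix.smul_apply, Matrix.of_apply, smul_eq_mul]
    linear_combination h
  rw [hdet, Matrix.det_succ_row_zero, Finset.sum_eq_single (0 : Fin (m + 1))]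
  · rw [hE00, Fin.succAbove_zero, hEsub, Matrix.det_smul, det_binomial]
    simp
  · intro j _ hj
    obtain ⟨j', rfl⟩ := Fin.eq_succ_of_ne_zero hj
    rw [hE0succ]
    ring
  · intro h
    exact absurd (Finset.mem_univ _) h
end

section
/- Let d(n) = det(M(n)) where M(n) is the generalized Pascal matrix whose first column and first row both satisfy order-2 linear recursions with coefficients (A_1, A_2) and (B_1, B_2) respectively. Then d(1) = γ_0, d(2) = γ_0(α_1 + β_1) − α_1β_1, and d(n) = D_1·d(n−1) + D_2·d(n−2) for n ≥ 3, where D_1 = −(A_1β_1 + B_1α_1 − 2(α_1+β_1) + γ_0(A_1B_2 + A_2B_1 − (A_2+B_2) + A_2B_2)) and D_2 = −(A_2γ_0 + α_1 + (1−A_1−A_2)β_1)·(B_2γ_0 + β_1 + (1−B_1−B_2)α_1). -/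
namespace Stmt11Aux

open Finset Matrix

variable {R : Type*} [CommRing R]

def dOp (f : ℕ → R) : ℕ → R := fun n => f (n + 1) - f n

def dd (f : ℕ → R) (k : ℕ) : R := (dOp^[k] f) 0

lemma dd_zero (f : ℕ → R) : dd f 0 = f 0 := rfl

lemma dd_succ (f : ℕ → R) (k : ℕ) : dd f (k + 1) = dd (dOp f) k := by
  simp [dd, Function.iterate_succ_apply]

lemma binom_step (f : ℕ → R) (i : ℕ) :
    ∑ k ∈ range (i + 2), (((i + 1).choose k : ℕ) : R) * f k =
      ∑ k ∈ range (i + 1), ((i.choose k : ℕ) : R) * f k +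
        ∑ k ∈ range (i + 1), ((i.choose k : ℕ) : R) * f (k + 1) := by
  have h1 : ∑ k ∈ range (i + 1), ((i.choose (k + 1) : ℕ) : R) * f (k + 1)
      = ∑ k ∈ range i, ((i.choose (k + 1) : ℕ) : R) * f (k + 1) := by
    rw [Finset.sum_range_succ, Nat.choose_succ_self]
    simp
  rw [Finset.sum_range_succ' (fun k => (((i + 1).choose k : ℕ) : R) * f k) (i + 1),
      Finset.sum_range_succ' (fun k => ((i.choose k : ℕ) : R) * f k) i]
  simp only [Nat.choose_succ_succ, Nat.cast_add, add_mul, Finset.sum_add_distrib, h1,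
    Nat.choose_zero_right, Nat.cast_one]
  ring

lemma binom_inv (i : ℕ) : ∀ f : ℕ → R,
    ∑ k ∈ range (i + 1), ((i.choose k : ℕ) : R) * dd f k = f i := by
  induction i with
  | zero => intro f; simp [dd]
  | succ i ih =>
    intro f
    rw [show i + 1 + 1 = i + 2 from rfl, binom_step]
    have h2 : ∑ k ∈ range (i + 1), ((i.choose k : ℕ) : R) * dd f (k + 1)
        = ∑ k ∈ range (i + 1), ((i.choose k : ℕ) : R) * dd (dOp f) k := by
      refine Finset.sum_congr rfl fun k _ => ?_
      rw [dd_succ]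
    rw [h2, ih f, ih (dOp f)]
    simp only [dOp]
    ring

lemma dOp_lin (a b : R) (f g : ℕ → R) :
    dOp (fun n => a * f n + b * g n) = fun n => a * dOp f n + b * dOp g n := by
  funext n; simp only [dOp]; ring

lemma dd_lin (k : ℕ) : ∀ (a b : R) (f g : ℕ → R),
    dd (fun n => a * f n + b * g n) k = a * dd f k + b * dd g k := by
  induction k with
  | zero => intro a b f g; simp [dd]
  | succ k ih =>
    intro a b f g
    rw [dd_succ, dOp_lin, ih, dd_succ, dd_succ]

lemma dd_rec (A₁ A₂ : R) (α : ℕ → R) (h : ∀ n, α (n + 2) = A₁ * α (n + 1) + A₂ * α n) (k : ℕ) :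
    dd α (k + 2) = (A₁ - 2) * dd α (k + 1) + (A₁ + A₂ - 1) * dd α k := by
  have hdop : dOp (dOp α) = fun n => (A₁ - 2) * dOp α n + (A₁ + A₂ - 1) * α n := by
    funext n
    simp only [dOp]
    rw [h n]; ring
  rw [show k + 2 = (k + 1) + 1 from rfl, dd_succ, show k + 1 = k + 1 from rfl, dd_succ, hdop,
    dd_lin, ← dd_succ]

lemma dd_one (f : ℕ → R) : dd f 1 = f 1 - f 0 := rfl

lemma dd_two (f : ℕ → R) : dd f 2 = f 2 - f 1 - (f 1 - f 0) := rfl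


def tEnt (u v : ℕ → R) (i j : ℕ) : R := if i ≤ j then u (j - i) else v (i - j)

lemma tEnt_shift (u v : ℕ → R) (k l : ℕ) : tEnt u v (k + 1) (l + 1) = tEnt u v k l := by
  simp [tEnt, Nat.succ_sub_succ, Nat.add_le_add_iff_right]

lemma tu (u v : ℕ → R) (a b t : ℕ) (h1 : a ≤ b) (h2 : b - a = t) :
    tEnt u v a b = u t := by rw [tEnt, if_pos h1, h2]

lemma tv (u v : ℕ → R) (huv : u 0 = v 0) (a b t : ℕ) (h1 : b ≤ a) (h2 : a - b = t) :
    tEnt u v a b = v t := by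
  rcases Nat.lt_or_ge b a with hlt | hge
  · rw [tEnt, if_neg (by omega), h2]
  · have hab : a = b := le_antisymm hge h1
    subst hab
    have ht : t = 0 := by omega
    subst ht
    rw [tEnt, if_pos le_rfl, Nat.sub_self, huv]

def zfun (u v : ℕ → R) (i j : ℕ) : R :=
  ∑ k ∈ range (i + 1), ((i.choose k : ℕ) : R) *
    ∑ l ∈ range (j + 1), ((j.choose l : ℕ) : R) * tEnt u v k l

lemma zfun_step (u v : ℕ → R) (i j : ℕ) :
    zfun u v (i + 1) (j + 1) = zfun u v i (j + 1) + zfun u v (i + 1) j := by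
  unfold zfun
  rw [binom_step (fun k => ∑ l ∈ range (j + 1 + 1), (((j + 1).choose l : ℕ) : R)
    * tEnt u v k l) i]
  rw [binom_step (fun k => ∑ l ∈ range (j + 1), ((j.choose l : ℕ) : R) * tEnt u v k l) i]
  have inner : ∀ k, ∑ l ∈ range (j + 1 + 1), (((j + 1).choose l : ℕ) : R) * tEnt u v k l
      = (∑ l ∈ range (j + 1), ((j.choose l : ℕ) : R) * tEnt u v k l)
        + ∑ l ∈ range (j + 1), ((j.choose l : ℕ) : R) * tEnt u v k (l + 1) :=
    fun k => binom_step (fun l => tEnt u v k l) j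
  simp only [inner, tEnt_shift, mul_add, Finset.sum_add_distrib]
  ring

lemma pascal_eq (α β u v : ℕ → R)
    (hv : ∀ i, ∑ k ∈ range (i + 1), ((i.choose k : ℕ) : R) * v k = α i)
    (hu : ∀ j, ∑ l ∈ range (j + 1), ((j.choose l : ℕ) : R) * u l = β j)
    (huv : u 0 = v 0) :
    ∀ i j, pascalRec α β i j = zfun u v i j := by
  have zi0 : ∀ i, zfun u v i 0 = α i := by
    intro i
    rw [← hv i]
    refine Finset.sum_congr rfl fun k _ => ?_
    rw [Finset.sum_range_one]
    rcases Nat.eq_zero_or_pos k with rfl | hk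
    · simp [tv u v huv 0 0 0 le_rfl rfl]
    · simp [tv u v huv k 0 k (Nat.zero_le k) rfl]
  have z0j : ∀ j, zfun u v 0 j = β j := by
    intro j
    rw [← hu j]
    unfold zfun
    rw [Finset.sum_range_one]
    simp only [Nat.choose_self, Nat.cast_one, one_mul]
    refine Finset.sum_congr rfl fun l _ => ?_
    rw [tu u v 0 l l (Nat.zero_le l) rfl]
  intro i
  induction i with
  | zero =>
    intro j
    cases j with
    | zero => rw [pascalRec]; rw [zi0]
    | succ j => rw [pascalRec]; rw [z0j]
  | succ i ih =>
    intro j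
    induction j with
    | zero => rw [pascalRec]; rw [zi0]
    | succ j ihj =>
      rw [pascalRec]; rw [ih (j + 1), ihj, zfun_step]


def ww3 (x y z : R) : ℕ → R
  | 0 => x
  | 1 => y
  | 2 => z
  | _ + 3 => 0

def eEnt (p q : R) (i k : ℕ) : R := if k ≤ i then ww3 1 (-p) (-q) (i - k) else 0

def comb3 (p q : R) (f : ℕ → R) : ℕ → R
  | 0 => f 0
  | 1 => f 1 - p * f 0
  | i + 2 => f (i + 2) - p * f (i + 1) - q * f i

lemma sum_ww3_comb (p q : R) (f : ℕ → R) (i : ℕ) :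
    ∑ m ∈ range (i + 1), ww3 1 (-p) (-q) m * f (i - m) = comb3 p q f i := by
  match i with
  | 0 => simp [ww3, comb3]
  | 1 =>
    rw [Finset.sum_range_succ, Finset.sum_range_one]
    simp [ww3, comb3]
    ring
  | (m + 2) =>
    have hsub : ∑ k ∈ range 3, ww3 (1 : R) (-p) (-q) k * f (m + 2 - k)
        = ∑ k ∈ range (m + 3), ww3 (1 : R) (-p) (-q) k * f (m + 2 - k) := by
      refine Finset.sum_subset (Finset.range_subset_range.mpr (by omega)) fun x _ hx => ?_
      have hx3 : 3 ≤ x := by simpa [Finset.mem_range] using hx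
      obtain ⟨y, rfl⟩ := Nat.exists_eq_add_of_le hx3
      rw [show ww3 (1 : R) (-p) (-q) (3 + y) = 0 from by
        rw [show 3 + y = y + 3 from by omega]; rfl]
      ring
    rw [show m + 2 + 1 = m + 3 from rfl, ← hsub]
    rw [Finset.sum_range_succ, Finset.sum_range_succ, Finset.sum_range_one]
    show 1 * f (m + 2 - 0) + -p * f (m + 2 - 1) + -q * f (m + 2 - 2) = _
    rw [show m + 2 - 0 = m + 2 from rfl, show m + 2 - 1 = m + 1 from rfl,
      show m + 2 - 2 = m from by omega]
    show _ = f (m + 2) - p * f (m + 1) - q * f m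
    ring

lemma sum_eEnt_mul (p q : R) (f : ℕ → R) {n : ℕ} (i : Fin n) :
    ∑ k : Fin n, eEnt p q ↑i ↑k * f ↑k = comb3 p q f ↑i := by
  have h1 : ∑ k : Fin n, eEnt p q ↑i ↑k * f ↑k
      = ∑ k ∈ range (↑i + 1), eEnt p q ↑i k * f k := by
    rw [Fin.sum_univ_eq_sum_range (fun k => eEnt p q ↑i k * f k) n]
    refine (Finset.sum_subset (Finset.range_subset_range.mpr i.isLt) fun x _ hx => ?_).symm
    have : ¬ (x ≤ ↑i) := by simpa [Finset.mem_range, Nat.lt_succ_iff] using hx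
    simp [eEnt, this]
  have h2 : ∑ k ∈ range (↑i + 1), eEnt p q ↑i k * f k
      = ∑ m ∈ range (↑i + 1), ww3 1 (-p) (-q) m * f (↑i - m) := by
    rw [← Finset.sum_range_reflect (fun m => ww3 1 (-p) (-q) m * f (↑i - m)) (↑i + 1)]
    refine Finset.sum_congr rfl fun k hk => ?_
    simp only [Finset.mem_range] at hk
    rw [eEnt, if_pos (by omega)]
    rw [show ↑i + 1 - 1 - k = ↑i - k from by omega, show ↑i - (↑i - k) = k from by omega]
  rw [h1, h2, sum_ww3_comb]

lemma E_mul {n : ℕ} (p q : R) (X : ℕ → ℕ → R) :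
    (Matrix.of fun i k : Fin n => eEnt p q ↑i ↑k) * (Matrix.of fun k l : Fin n => X ↑k ↑l)
      = Matrix.of fun i l : Fin n => comb3 p q (fun k => X k ↑l) ↑i := by
  ext i l
  rw [Matrix.mul_apply]
  simp only [Matrix.of_apply]
  exact sum_eEnt_mul p q (fun k => X k ↑l) i

lemma mul_F {n : ℕ} (p q : R) (X : ℕ → ℕ → R) :
    (Matrix.of fun i l : Fin n => X ↑i ↑l) * (Matrix.of fun l j : Fin n => eEnt p q ↑j ↑l)
      = Matrix.of fun i j : Fin n => comb3 p q (fun l => X ↑i l) ↑j := by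
  ext i j
  rw [Matrix.mul_apply]
  simp only [Matrix.of_apply]
  rw [Finset.sum_congr rfl fun (l : Fin n) _ =>
    mul_comm (X ↑i ↑l) (eEnt p q ↑j ↑l)]
  exact sum_eEnt_mul p q (fun l => X ↑i l) j

def gEnt (g0 h e c0 c c0' c' : R) (i j : ℕ) : R :=
  if i = 0 ∧ j = 0 then g0
  else if i = 1 ∧ j = 1 then h
  else if i = j then e
  else if i = 0 ∧ j = 1 then c0
  else if j = i + 1 then c
  else if i = 1 ∧ j = 0 then c0'
  else if i = j + 1 then c'
  else 0

set_option maxHeartbeats 3200000 in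
lemma comb_eq_gEnt (u v : ℕ → R) (p q p' q' : R)
    (hu : ∀ k, u (k + 2) = p' * u (k + 1) + q' * u k)
    (hv : ∀ k, v (k + 2) = p * v (k + 1) + q * v k)
    (huv : u 0 = v 0) (i j : ℕ) :
    comb3 p' q' (fun l => comb3 p q (fun k => tEnt u v k l) i) j
      = gEnt (u 0) (v 0 - p * u 1 - p' * (v 1 - p * u 0))
          (v 0 - p * u 1 - q * u 2 - p' * (v 1 - p * v 0 - q * u 1))
          (u 1 - p' * u 0) (u 1 - p' * v 0 - q' * v 1) (v 1 - p * u 0)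
          (v 1 - p * v 0 - q * u 1) i j := by
  rcases i with _ | _ | a <;> rcases j with _ | _ | b
  · simp only [comb3, Nat.zero_add]
    rw [tu u v (0) (0) (0) (by omega) (by omega)]
    unfold gEnt; split_ifs <;> first | (exfalso; omega) | (exfalso; simp_all; done) | linear_combination
  · simp only [comb3, Nat.zero_add]
    rw [tu u v (0) (1) (1) (by omega) (by omega),
      tu u v (0) (0) (0) (by omega) (by omega)]
    unfold gEnt; split_ifs <;> first | (exfalso; omega) | (exfalso; simp_all; done) | linear_combination
  · simp only [comb3, Nat.zero_add]
    rw [tu u v (0) (b+2) (b+2) (by omega) (by omega),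
      tu u v (0) (b+1) (b+1) (by omega) (by omega),
      tu u v (0) (b) (b) (by omega) (by omega)]
    unfold gEnt; split_ifs <;> first | (exfalso; omega) | (exfalso; simp_all; done) | linear_combination hu b
  · simp only [comb3, Nat.zero_add]
    rw [tv u v huv (1) (0) (1) (by omega) (by omega),
      tu u v (0) (0) (0) (by omega) (by omega)]
    unfold gEnt; split_ifs <;> first | (exfalso; omega) | (exfalso; simp_all; done) | linear_combination
  · simp only [comb3, Nat.zero_add]
    rw [tv u v huv (1) (1) (0) (by omega) (by omega),
      tu u v (0) (1) (1) (by omega) (by omega),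
      tv u v huv (1) (0) (1) (by omega) (by omega),
      tu u v (0) (0) (0) (by omega) (by omega)]
    unfold gEnt; split_ifs <;> first | (exfalso; omega) | (exfalso; simp_all; done) | linear_combination
  · rcases Nat.eq_zero_or_pos b with rfl | hb
    · simp only [comb3, Nat.zero_add]
      rw [tu u v (1) (2) (1) (by omega) (by omega),
        tu u v (0) (2) (2) (by omega) (by omega),
        tv u v huv (1) (1) (0) (by omega) (by omega),
        tu u v (0) (1) (1) (by omega) (by omega),
        tv u v huv (1) (0) (1) (by omega) (by omega),
        tu u v (0) (0) (0) (by omega) (by omega)]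
      unfold gEnt; split_ifs <;> first | (exfalso; omega) | (exfalso; simp_all; done) | linear_combination (-p) * hu 0
    · obtain ⟨b', rfl⟩ : ∃ b', b = b' + 1 := ⟨b - 1, by omega⟩
      simp only [comb3, Nat.zero_add]
      rw [tu u v (1) (b'+1+2) (b'+2) (by omega) (by omega),
        tu u v (0) (b'+1+2) (b'+3) (by omega) (by omega),
        tu u v (1) (b'+1+1) (b'+1) (by omega) (by omega),
        tu u v (0) (b'+1+1) (b'+2) (by omega) (by omega),
        tu u v (1) (b'+1) (b') (by omega) (by omega),
        tu u v (0) (b'+1) (b'+1) (by omega) (by omega)]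
      unfold gEnt; split_ifs <;> first | (exfalso; omega) | (exfalso; simp_all; done) | linear_combination hu b' - p * hu (b' + 1)
  · simp only [comb3, Nat.zero_add]
    rw [tv u v huv (a+2) (0) (a+2) (by omega) (by omega),
      tv u v huv (a+1) (0) (a+1) (by omega) (by omega),
      tv u v huv (a) (0) (a) (by omega) (by omega)]
    unfold gEnt; split_ifs <;> first | (exfalso; omega) | (exfalso; simp_all; done) | linear_combination hv a
  · rcases Nat.eq_zero_or_pos a with rfl | ha
    · simp only [comb3, Nat.zero_add]
      rw [tv u v huv (2) (1) (1) (by omega) (by omega),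
        tv u v huv (1) (1) (0) (by omega) (by omega),
        tu u v (0) (1) (1) (by omega) (by omega),
        tv u v huv (2) (0) (2) (by omega) (by omega),
        tv u v huv (1) (0) (1) (by omega) (by omega),
        tu u v (0) (0) (0) (by omega) (by omega)]
      unfold gEnt; split_ifs <;> first | (exfalso; omega) | (exfalso; simp_all; done) | linear_combination (-p') * hv 0 + p' * q * huv
    · obtain ⟨a', rfl⟩ : ∃ a', a = a' + 1 := ⟨a - 1, by omega⟩
      simp only [comb3, Nat.zero_add]
      rw [tv u v huv (a'+1+2) (1) (a'+2) (by omega) (by omega),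
        tv u v huv (a'+1+1) (1) (a'+1) (by omega) (by omega),
        tv u v huv (a'+1) (1) (a') (by omega) (by omega),
        tv u v huv (a'+1+2) (0) (a'+3) (by omega) (by omega),
        tv u v huv (a'+1+1) (0) (a'+2) (by omega) (by omega),
        tv u v huv (a'+1) (0) (a'+1) (by omega) (by omega)]
      unfold gEnt; split_ifs <;> first | (exfalso; omega) | (exfalso; simp_all; done) | linear_combination hv a' - p' * hv (a' + 1)
  · have hsplit : b = a ∨ b = a + 1 ∨ a = b + 1 ∨ (∃ t, b = a + 2 + t) ∨ (∃ t, a = b + 2 + t) := by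
      rcases Nat.lt_trichotomy a b with h | h | h
      · rcases Nat.lt_or_ge b (a + 2) with h2 | h2
        · right; left; omega
        · right; right; right; left; exact ⟨b - (a + 2), by omega⟩
      · left; omega
      · rcases Nat.lt_or_ge a (b + 2) with h2 | h2
        · right; right; left; omega
        · right; right; right; right; exact ⟨a - (b + 2), by omega⟩
    rcases hsplit with rfl | rfl | rfl | ⟨t, rfl⟩ | ⟨t, rfl⟩
    · simp only [comb3, Nat.zero_add]
      rw [tv u v huv (b+2) (b+2) (0) (by omega) (by omega),
        tu u v (b+1) (b+2) (1) (by omega) (by omega),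
        tu u v (b) (b+2) (2) (by omega) (by omega),
        tv u v huv (b+2) (b+1) (1) (by omega) (by omega),
        tv u v huv (b+1) (b+1) (0) (by omega) (by omega),
        tu u v (b) (b+1) (1) (by omega) (by omega),
        tv u v huv (b+2) (b) (2) (by omega) (by omega),
        tv u v huv (b+1) (b) (1) (by omega) (by omega),
        tv u v huv (b) (b) (0) (by omega) (by omega)]
      unfold gEnt; split_ifs <;> first | (exfalso; omega) | (exfalso; simp_all; done) | linear_combination (-q') * hv 0
    · simp only [comb3, Nat.zero_add]
      rw [tu u v (a+2) (a+1+2) (1) (by omega) (by omega),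
        tu u v (a+1) (a+1+2) (2) (by omega) (by omega),
        tu u v (a) (a+1+2) (3) (by omega) (by omega),
        tv u v huv (a+2) (a+1+1) (0) (by omega) (by omega),
        tu u v (a+1) (a+1+1) (1) (by omega) (by omega),
        tu u v (a) (a+1+1) (2) (by omega) (by omega),
        tv u v huv (a+2) (a+1) (1) (by omega) (by omega),
        tv u v huv (a+1) (a+1) (0) (by omega) (by omega),
        tu u v (a) (a+1) (1) (by omega) (by omega)]
      unfold gEnt; split_ifs <;> first | (exfalso; omega) | (exfalso; simp_all; done) | linear_combination (-p) * hu 0 + (-q) * hu 1 + (-(p * q')) * huv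
    · simp only [comb3, Nat.zero_add]
      rw [tv u v huv (b+1+2) (b+2) (1) (by omega) (by omega),
        tv u v huv (b+1+1) (b+2) (0) (by omega) (by omega),
        tu u v (b+1) (b+2) (1) (by omega) (by omega),
        tv u v huv (b+1+2) (b+1) (2) (by omega) (by omega),
        tv u v huv (b+1+1) (b+1) (1) (by omega) (by omega),
        tv u v huv (b+1) (b+1) (0) (by omega) (by omega),
        tv u v huv (b+1+2) (b) (3) (by omega) (by omega),
        tv u v huv (b+1+1) (b) (2) (by omega) (by omega),
        tv u v huv (b+1) (b) (1) (by omega) (by omega)]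
      unfold gEnt; split_ifs <;> first | (exfalso; omega) | (exfalso; simp_all; done) | linear_combination (-p') * hv 0 + (-q') * hv 1
    · simp only [comb3, Nat.zero_add]
      rw [tu u v (a+2) (a+2+t+2) (t+2) (by omega) (by omega),
        tu u v (a+1) (a+2+t+2) (t+3) (by omega) (by omega),
        tu u v (a) (a+2+t+2) (t+4) (by omega) (by omega),
        tu u v (a+2) (a+2+t+1) (t+1) (by omega) (by omega),
        tu u v (a+1) (a+2+t+1) (t+2) (by omega) (by omega),
        tu u v (a) (a+2+t+1) (t+3) (by omega) (by omega),
        tu u v (a+2) (a+2+t) (t) (by omega) (by omega),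
        tu u v (a+1) (a+2+t) (t+1) (by omega) (by omega),
        tu u v (a) (a+2+t) (t+2) (by omega) (by omega)]
      unfold gEnt; split_ifs <;> first | (exfalso; omega) | (exfalso; simp_all; done) | linear_combination hu t - p * hu (t + 1) - q * hu (t + 2)
    · simp only [comb3, Nat.zero_add]
      rw [tv u v huv (b+2+t+2) (b+2) (t+2) (by omega) (by omega),
        tv u v huv (b+2+t+1) (b+2) (t+1) (by omega) (by omega),
        tv u v huv (b+2+t) (b+2) (t) (by omega) (by omega),
        tv u v huv (b+2+t+2) (b+1) (t+3) (by omega) (by omega),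
        tv u v huv (b+2+t+1) (b+1) (t+2) (by omega) (by omega),
        tv u v huv (b+2+t) (b+1) (t+1) (by omega) (by omega),
        tv u v huv (b+2+t+2) (b) (t+4) (by omega) (by omega),
        tv u v huv (b+2+t+1) (b) (t+3) (by omega) (by omega),
        tv u v huv (b+2+t) (b) (t+2) (by omega) (by omega)]
      unfold gEnt; split_ifs <;> first | (exfalso; omega) | (exfalso; simp_all; done) | linear_combination hv t - p' * hv (t + 1) - q' * hv (t + 2)

lemma sum_fin_truncate {n m : ℕ} (hm : m < n) (f : ℕ → R) (hf : ∀ k, m < k → f k = 0) :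
    ∑ k : Fin n, f ↑k = ∑ k ∈ range (m + 1), f k := by
  rw [Fin.sum_univ_eq_sum_range]
  refine (Finset.sum_subset (Finset.range_subset_range.mpr hm) fun x _ hx => ?_).symm
  exact hf x (by simpa [Finset.mem_range, Nat.lt_succ_iff] using hx)

lemma det_pascal_toeplitz (α β u v : ℕ → R)
    (hv : ∀ i, ∑ k ∈ range (i + 1), ((i.choose k : ℕ) : R) * v k = α i)
    (hu : ∀ j, ∑ l ∈ range (j + 1), ((j.choose l : ℕ) : R) * u l = β j)
    (huv : u 0 = v 0) (n : ℕ) :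
    (Matrix.of fun i j : Fin n => pascalRec α β ↑i ↑j).det
      = (Matrix.of fun i j : Fin n => tEnt u v ↑i ↑j).det := by
  classical
  set Pm : Matrix (Fin n) (Fin n) R :=
    Matrix.of fun i j : Fin n => ((Nat.choose ↑i ↑j : ℕ) : R) with hPm
  set Tm : Matrix (Fin n) (Fin n) R :=
    Matrix.of fun i j : Fin n => tEnt u v ↑i ↑j with hTm
  have hPlow : Pm.BlockTriangular OrderDual.toDual := by
    intro i j hij
    have hij' : (i : ℕ) < (j : ℕ) := hij
    simp [hPm, Nat.choose_eq_zero_of_lt hij']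
  have hPdet : Pm.det = 1 := by
    rw [Matrix.det_of_lowerTriangular Pm hPlow]
    simp [hPm]
  have key : Pm * Tm * Pmᵀ = Matrix.of fun i j : Fin n => pascalRec α β ↑i ↑j := by
    ext i j
    simp only [Matrix.of_apply]
    rw [pascal_eq α β u v hv hu huv ↑i ↑j]
    rw [Matrix.mul_apply]
    have hPT : ∀ l : Fin n, (Pm * Tm) i l
        = ∑ k ∈ range (↑i + 1), ((Nat.choose ↑i k : ℕ) : R) * tEnt u v k ↑l := by
      intro l
      rw [Matrix.mul_apply]
      simp only [hPm, hTm, Matrix.of_apply]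
      exact sum_fin_truncate i.isLt
        (fun k => ((Nat.choose ↑i k : ℕ) : R) * tEnt u v k ↑l)
        (fun k hk => by simp [Nat.choose_eq_zero_of_lt hk])
    calc ∑ l : Fin n, (Pm * Tm) i l * Pmᵀ l j
        = ∑ l : Fin n, (∑ k ∈ range (↑i + 1), ((Nat.choose ↑i k : ℕ) : R) * tEnt u v k ↑l)
            * ((Nat.choose ↑j ↑l : ℕ) : R) := by
          refine Finset.sum_congr rfl fun l _ => ?_
          rw [hPT l, Matrix.transpose_apply]
          simp [hPm]
      _ = ∑ l ∈ range (↑j + 1), (∑ k ∈ range (↑i + 1), ((Nat.choose ↑i k : ℕ) : R)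
            * tEnt u v k l) * ((Nat.choose ↑j l : ℕ) : R) :=
          sum_fin_truncate j.isLt
            (fun l => (∑ k ∈ range (↑i + 1), ((Nat.choose ↑i k : ℕ) : R) * tEnt u v k l)
              * ((Nat.choose ↑j l : ℕ) : R))
            (fun l hl => by simp [Nat.choose_eq_zero_of_lt hl])
      _ = zfun u v ↑i ↑j := by
          unfold zfun
          simp only [Finset.sum_mul]
          rw [Finset.sum_comm]
          refine Finset.sum_congr rfl fun k _ => ?_
          rw [Finset.mul_sum]
          refine Finset.sum_congr rfl fun l _ => by ring
  rw [← key, Matrix.det_mul, Matrix.det_mul, hPdet, Matrix.det_transpose, hPdet,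
    one_mul, mul_one]

lemma det_toeplitz_g (u v : ℕ → R) (p q p' q' : R)
    (hu : ∀ k, u (k + 2) = p' * u (k + 1) + q' * u k)
    (hv : ∀ k, v (k + 2) = p * v (k + 1) + q * v k)
    (huv : u 0 = v 0) (n : ℕ) :
    (Matrix.of fun i j : Fin n => tEnt u v ↑i ↑j).det
      = (Matrix.of fun i j : Fin n => gEnt (u 0) (v 0 - p * u 1 - p' * (v 1 - p * u 0))
          (v 0 - p * u 1 - q * u 2 - p' * (v 1 - p * v 0 - q * u 1))
          (u 1 - p' * u 0) (u 1 - p' * v 0 - q' * v 1) (v 1 - p * u 0)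
          (v 1 - p * v 0 - q * u 1) ↑i ↑j).det := by
  classical
  set Em : Matrix (Fin n) (Fin n) R := Matrix.of fun i k : Fin n => eEnt p q ↑i ↑k with hEm
  set Fm : Matrix (Fin n) (Fin n) R := Matrix.of fun l j : Fin n => eEnt p' q' ↑j ↑l with hFm
  have hElow : Em.BlockTriangular OrderDual.toDual := by
    intro i j hij
    have hij' : (i : ℕ) < (j : ℕ) := hij
    simp only [hEm, Matrix.of_apply, eEnt]
    rw [if_neg (by omega)]
  have hEdet : Em.det = 1 := by
    rw [Matrix.det_of_lowerTriangular Em hElow]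
    refine Finset.prod_eq_one fun i _ => ?_
    simp [hEm, eEnt, ww3]
  have hFup : Fm.BlockTriangular id := by
    intro i j hij
    have hij' : (j : ℕ) < (i : ℕ) := hij
    simp only [hFm, Matrix.of_apply, eEnt]
    rw [if_neg (by omega)]
  have hFdet : Fm.det = 1 := by
    rw [Matrix.det_of_upperTriangular hFup]
    refine Finset.prod_eq_one fun i _ => ?_
    simp [hFm, eEnt, ww3]
  have key : Em * (Matrix.of fun i j : Fin n => tEnt u v ↑i ↑j) * Fm
      = Matrix.of fun i j : Fin n => gEnt (u 0) (v 0 - p * u 1 - p' * (v 1 - p * u 0))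
          (v 0 - p * u 1 - q * u 2 - p' * (v 1 - p * v 0 - q * u 1))
          (u 1 - p' * u 0) (u 1 - p' * v 0 - q' * v 1) (v 1 - p * u 0)
          (v 1 - p * v 0 - q * u 1) ↑i ↑j := by
    rw [hEm, E_mul p q (fun k l => tEnt u v k l), hFm,
      mul_F p' q' (fun i l => comb3 p q (fun k => tEnt u v k l) i)]
    ext i j
    simp only [Matrix.of_apply]
    exact comb_eq_gEnt u v p q p' q' hu hv huv ↑i ↑j
  rw [← key, Matrix.det_mul, Matrix.det_mul, hEdet, hFdet, one_mul, mul_one]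

def gR (g0 h e c0 c c0' c' : R) (n : ℕ) : Matrix (Fin n) (Fin n) R :=
  Matrix.of fun i j : Fin n => gEnt g0 h e c0 c c0' c' (n - 1 - ↑i) (n - 1 - ↑j)

lemma det_gR (g0 h e c0 c c0' c' : R) (n : ℕ) :
    (gR g0 h e c0 c c0' c' n).det
      = (Matrix.of fun i j : Fin n => gEnt g0 h e c0 c c0' c' ↑i ↑j).det := by
  rw [show gR g0 h e c0 c c0' c' n
      = (Matrix.of fun i j : Fin n => gEnt g0 h e c0 c c0' c' ↑i ↑j).submatrix
          Fin.revPerm Fin.revPerm from ?_]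
  · exact Matrix.det_submatrix_equiv_self _ _
  · ext i j
    simp only [gR, Matrix.submatrix_apply, Matrix.of_apply, Equiv.coe_fn_mk, Fin.revPerm_apply,
      Fin.val_rev]
    rw [show n - 1 - ↑i = n - (↑i + 1) from by omega, show n - 1 - ↑j = n - (↑j + 1) from by omega]

lemma det_gR_rec (g0 h e c0 c c0' c' : R) (m : ℕ) :
    (gR g0 h e c0 c c0' c' (m + 3)).det
      = e * (gR g0 h e c0 c c0' c' (m + 2)).det
        - c' * (c * (gR g0 h e c0 c c0' c' (m + 1)).det) := by
  set A := gR g0 h e c0 c c0' c' (m + 3) with hA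
  rw [show A.det = (A : Matrix (Fin (m + 2).succ) (Fin (m + 2).succ) R).det from rfl]
  rw [Matrix.det_succ_row_zero, Fin.sum_univ_succ, Fin.sum_univ_succ]
  simp only [Fin.succ_zero_eq_one]
  have h00 : A 0 0 = e := by
    simp only [hA, gR, Matrix.of_apply, Fin.val_zero, gEnt]
    split_ifs <;> first | rfl | (exfalso; omega)
  have h01 : A 0 1 = c' := by
    simp only [hA, gR, Matrix.of_apply, Fin.val_zero, Fin.val_one]; unfold gEnt
    split_ifs <;> first | rfl | (exfalso; omega)
  have hrest : ∑ j : Fin (m + 1),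
      (-1 : R) ^ (↑(j.succ.succ) : ℕ) * A 0 j.succ.succ
        * (A.submatrix Fin.succ (j.succ.succ).succAbove).det = 0 := by
    refine Finset.sum_eq_zero fun j _ => ?_
    have hj := j.isLt
    have hz : A 0 j.succ.succ = 0 := by
      simp only [hA, gR, Matrix.of_apply, Fin.val_zero, Fin.val_succ]; unfold gEnt
      split_ifs <;> first | rfl | (exfalso; omega)
    rw [hz]; ring
  have hsub0 : A.submatrix Fin.succ ((0 : Fin (m + 3)).succAbove)
      = gR g0 h e c0 c c0' c' (m + 2) := by
    ext i j
    simp only [hA, gR, Matrix.submatrix_apply, Matrix.of_apply, Fin.succAbove_zero,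
      Fin.val_succ]
    rw [show m + 3 - 1 - (↑i + 1) = m + 2 - 1 - ↑i from by omega,
      show m + 3 - 1 - (↑j + 1) = m + 2 - 1 - ↑j from by omega]
  have hsub1 : ((A.submatrix Fin.succ ((1 : Fin (m + 3)).succAbove)).submatrix
        ((0 : Fin (m + 2)).succAbove) Fin.succ)
      = gR g0 h e c0 c c0' c' (m + 1) := by
    ext i j
    have hval : (((1 : Fin (m + 3)).succAbove j.succ) : ℕ) = ↑j + 2 := by
      rw [← Fin.succ_zero_eq_one, Fin.succ_succAbove_succ, Fin.succAbove_zero]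
      simp [Fin.val_succ]
    simp only [hA, gR, Matrix.submatrix_apply, Matrix.of_apply, Fin.succAbove_zero,
      Fin.val_succ, hval]
    rw [show m + 3 - 1 - (↑i + 1 + 1) = m + 1 - 1 - ↑i from by omega,
      show m + 3 - 1 - (↑j + 2) = m + 1 - 1 - ↑j from by omega]
  have hdetB : (A.submatrix Fin.succ ((1 : Fin (m + 3)).succAbove)).det
      = c * (gR g0 h e c0 c c0' c' (m + 1)).det := by
    set B := A.submatrix Fin.succ ((1 : Fin (m + 3)).succAbove) with hB
    rw [show B.det = (B : Matrix (Fin (m + 1).succ) (Fin (m + 1).succ) R).det from rfl]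
    rw [Matrix.det_succ_column_zero, Fin.sum_univ_succ]
    have hB00 : B 0 0 = c := by
      have hval : (((1 : Fin (m + 3)).succAbove 0) : ℕ) = 0 := by
        rw [Fin.one_succAbove_zero]
        rfl
      simp only [hB, hA, gR, Matrix.submatrix_apply, Matrix.of_apply, Fin.val_succ,
        Fin.val_zero, hval, gEnt]
      split_ifs <;> first | rfl | (exfalso; omega)
    have hBrest : ∑ i : Fin (m + 1),
        (-1 : R) ^ (↑(i.succ) : ℕ) * B i.succ 0
          * (B.submatrix (i.succ).succAbove Fin.succ).det = 0 := by
      refine Finset.sum_eq_zero fun i _ => ?_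
      have hi := i.isLt
      have hz : B i.succ 0 = 0 := by
        have hval : (((1 : Fin (m + 3)).succAbove 0) : ℕ) = 0 := by
          rw [Fin.one_succAbove_zero]
          rfl
        simp only [hB, hA, gR, Matrix.submatrix_apply, Matrix.of_apply, Fin.val_succ,
          hval, gEnt]
        split_ifs <;> first | rfl | (exfalso; omega)
      rw [hz]; ring
    rw [hBrest, hB00, hsub1]
    simp
  rw [hrest, h00, h01, hsub0, hdetB]
  simp only [Fin.val_zero, pow_zero, Fin.val_one, pow_one]
  ring

end Stmt11Aux

theorem stmt_11 {R : Type*} [CommRing R]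
    (γ₀ α₁ β₁ A₁ A₂ B₁ B₂ : R) (α β : ℕ → R)
    (hα0 : α 0 = γ₀) (hα1 : α 1 = α₁)
    (hαrec : ∀ k, α (k + 2) = A₁ * α (k + 1) + A₂ * α k)
    (hβ0 : β 0 = γ₀) (hβ1 : β 1 = β₁)
    (hβrec : ∀ k, β (k + 2) = B₁ * β (k + 1) + B₂ * β k)
    (d : ℕ → R)
    (hd : ∀ n, d n = (Matrix.of fun i j : Fin n => pascalRec α β i j).det)
    (D₁ D₂ : R)
    (hD1 : D₁ = -(A₁ * β₁ + B₁ * α₁ - 2 * (α₁ + β₁) +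
        γ₀ * (A₁ * B₂ + A₂ * B₁ - (A₂ + B₂) + A₂ * B₂)))
    (hD2 : D₂ = -((A₂ * γ₀ + α₁ + (1 - A₁ - A₂) * β₁) *
        (B₂ * γ₀ + β₁ + (1 - B₁ - B₂) * α₁))) :
    d 1 = γ₀ ∧ d 2 = γ₀ * (α₁ + β₁) - α₁ * β₁ ∧
      ∀ n, 3 ≤ n → d n = D₁ * d (n - 1) + D₂ * d (n - 2) := by
    classical
  refine ⟨?_, ?_, ?_⟩
  · rw [hd 1, Matrix.det_fin_one]
    simp only [Matrix.of_apply, Fin.val_zero]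
    rw [pascalRec]
    exact hα0
  · rw [hd 2, Matrix.det_fin_two]
    simp only [Matrix.of_apply, Fin.val_zero, Fin.val_one]
    have h00 : pascalRec α β 0 0 = α 0 := by rw [pascalRec]
    have h01 : pascalRec α β 0 1 = β 1 := by rw [pascalRec]
    have h10 : pascalRec α β 1 0 = α 1 := by rw [pascalRec]
    have h11 : pascalRec α β 1 1 = β 1 + α 1 := by simp [pascalRec, h01, h10]
    rw [h11, h01, h10, h00, hα0, hα1, hβ1]
    ring
  · intro n hn
    obtain ⟨m, rfl⟩ : ∃ m, n = m + 3 := ⟨n - 3, by omega⟩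
    have hu : ∀ k, Stmt11Aux.dd β (k + 2)
        = (B₁ - 2) * Stmt11Aux.dd β (k + 1) + (B₁ + B₂ - 1) * Stmt11Aux.dd β k :=
      Stmt11Aux.dd_rec B₁ B₂ β hβrec
    have hv : ∀ k, Stmt11Aux.dd α (k + 2)
        = (A₁ - 2) * Stmt11Aux.dd α (k + 1) + (A₁ + A₂ - 1) * Stmt11Aux.dd α k :=
      Stmt11Aux.dd_rec A₁ A₂ α hαrec
    have huv : Stmt11Aux.dd β 0 = Stmt11Aux.dd α 0 := by
      rw [Stmt11Aux.dd_zero, Stmt11Aux.dd_zero, hα0, hβ0]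
    set u : ℕ → R := Stmt11Aux.dd β with hudef
    set v : ℕ → R := Stmt11Aux.dd α with hvdef
    have hkey : ∀ N, d N = (Matrix.of fun i j : Fin N =>
        Stmt11Aux.gEnt (u 0)
          (v 0 - (A₁ - 2) * u 1 - (B₁ - 2) * (v 1 - (A₁ - 2) * u 0))
          (v 0 - (A₁ - 2) * u 1 - (A₁ + A₂ - 1) * u 2
            - (B₁ - 2) * (v 1 - (A₁ - 2) * v 0 - (A₁ + A₂ - 1) * u 1))
          (u 1 - (B₁ - 2) * u 0)
          (u 1 - (B₁ - 2) * v 0 - (B₁ + B₂ - 1) * v 1)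
          (v 1 - (A₁ - 2) * u 0)
          (v 1 - (A₁ - 2) * v 0 - (A₁ + A₂ - 1) * u 1) ↑i ↑j).det := by
      intro N
      rw [hd N,
        Stmt11Aux.det_pascal_toeplitz α β u v (fun i => Stmt11Aux.binom_inv i α)
          (fun j => Stmt11Aux.binom_inv j β) huv N,
        Stmt11Aux.det_toeplitz_g u v (A₁ - 2) (A₁ + A₂ - 1) (B₁ - 2) (B₁ + B₂ - 1)
          hu hv huv N]
    have hu0 : u 0 = γ₀ := by rw [hudef]; rw [Stmt11Aux.dd_zero, hβ0]
    have hu1 : u 1 = β₁ - γ₀ := by rw [hudef]; rw [Stmt11Aux.dd_one, hβ1, hβ0]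
    have hu2 : u 2 = B₁ * β₁ + B₂ * γ₀ - β₁ - (β₁ - γ₀) := by
      rw [hudef]; rw [Stmt11Aux.dd_two, hβrec 0, hβ1, hβ0]
    have hv0 : v 0 = γ₀ := by rw [hvdef]; rw [Stmt11Aux.dd_zero, hα0]
    have hv1 : v 1 = α₁ - γ₀ := by rw [hvdef]; rw [Stmt11Aux.dd_one, hα1, hα0]
    rw [show m + 3 - 1 = m + 2 from by omega, show m + 3 - 2 = m + 1 from by omega]
    rw [hkey (m + 3), ← Stmt11Aux.det_gR, Stmt11Aux.det_gR_rec, Stmt11Aux.det_gR,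
      Stmt11Aux.det_gR, ← hkey (m + 2), ← hkey (m + 1)]
    rw [hD1, hD2]
    rw [hu1, hu2, hv0, hv1]
    ring
end

section
/- The symplectic (antisymmetric) generalized Pascal matrices P_{α,−α}(2n) associated to the sequence α = (0,1,1,1,1,…) have determinant 1 for every natural integer n. -/
namespace Stmt12Aux

open Finset Matrix

def q (i j : ℕ) : ℤ := ((i + j - 1).choose j : ℤ) - ((i + j - 1).choose i : ℤ)
def aN (i k : ℕ) : ℤ := if i = 0 then (-1) ^ k else ((i - 1).choose k : ℤ)
def sN (k l : ℕ) : ℤ := if k = l + 1 then 1 else if l = k + 1 then -1 else 0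
def jpN (k l : ℕ) : ℤ :=
  if k = l + 1 ∧ l % 2 = 0 then 1 else if l = k + 1 ∧ k % 2 = 0 then -1 else 0
def lfN (i k : ℕ) : ℤ := if i = k then 1 else if i = k + 2 ∧ k % 2 = 0 then -1 else 0
def vfN (k l : ℕ) : ℤ := if k = l ∨ k + 1 = l then 1 else 0
def wN (i l : ℕ) : ℤ := if i = 0 then (if l = 0 then 1 else 0) else ((i : ℕ).choose l : ℤ)
def jp2 (a c : Fin 2) : ℤ := if a = 1 ∧ c = 0 then 1 else if a = 0 ∧ c = 1 then -1 else 0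

def e (n : ℕ) : Fin 2 × Fin n ≃ Fin (2 * n) :=
  (Equiv.prodComm (Fin 2) (Fin n)).trans (finProdFinEquiv.trans (finCongr (Nat.mul_comm n 2)))


lemma pascal_eq (i j : ℕ) :
    pascalRec (fun k => if k = 0 then (0 : ℤ) else 1)
      (fun k => -(if k = 0 then (0 : ℤ) else 1)) i j = q i j := by
  induction i generalizing j with
  | zero =>
    cases j with
    | zero => simp [pascalRec, q]
    | succ j =>
      simp only [pascalRec, q]
      rw [show 0 + (j+1) - 1 = j by omega, Nat.choose_eq_zero_of_lt (by omega : j < j + 1)]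
      simp
  | succ i ih =>
    induction j with
    | zero =>
      simp only [pascalRec, q]
      rw [Nat.choose_eq_zero_of_lt (by omega : i + 1 + 0 - 1 < i + 1)]
      simp
    | succ j ihj =>
      rw [show pascalRec (fun k => if k = 0 then (0 : ℤ) else 1)
          (fun k => -(if k = 0 then (0 : ℤ) else 1)) (i+1) (j+1) = _ from pascalRec.eq_3 .., ih (j+1), ihj]
      simp only [q]
      have e1 : i + (j + 1) - 1 = i + j := by omega
      have e2 : i + 1 + j - 1 = i + j := by omega
      have e3 : i + 1 + (j + 1) - 1 = i + j + 1 := by omega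
      rw [e1, e2, e3]
      have p1 : (i + j + 1).choose (j + 1) = (i+j).choose j + (i+j).choose (j+1) :=
        Nat.choose_succ_succ _ _
      have p2 : (i + j + 1).choose (i + 1) = (i+j).choose i + (i+j).choose (i+1) :=
        Nat.choose_succ_succ _ _
      have p3 : (i + j).choose j = (i + j).choose i := by
        rw [← Nat.choose_symm (by omega : j ≤ i + j)]
        congr 1; omega
      push_cast [p1, p2]
      rw [p3]; ring



/-- Vandermonde-type sum. -/
lemma vand (s t M : ℕ) (hM : t + 1 ≤ M) :
    ∑ l ∈ range M, ((s.choose (l+1) : ℤ) * (t.choose l : ℤ)) = ((s+t).choose (t+1) : ℤ) := by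
  rw [← Finset.sum_subset (Finset.range_subset_range.2 hM)
    (by intro l _ hl; rw [mem_range, not_lt] at hl
        rw [Nat.choose_eq_zero_of_lt (by omega : t < l)]; simp)]
  have : ∑ l ∈ range (t+1), (s.choose (l+1) * t.choose l) = (s+t).choose (t+1) := by
    rw [Nat.add_choose_eq, Finset.Nat.sum_antidiagonal_eq_sum_range_succ_mk]
    conv_rhs => rw [Finset.sum_range_succ']
    rw [Nat.choose_eq_zero_of_lt (by omega : t < t + 1 - 0)]
    simp only [mul_zero, add_zero, zero_add]
    refine Finset.sum_congr rfl fun l hl => ?_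
    rw [mem_range] at hl
    rw [show t + 1 - (l + 1) = t - l by omega, Nat.choose_symm (by omega : l ≤ t)]
  exact_mod_cast congrArg (Nat.cast : ℕ → ℤ) this

/-- The alternating-sum boundary case. -/
lemma alt_sum (t M : ℕ) (hM : t + 1 ≤ M) :
    ∑ l ∈ range M, ((-1:ℤ) ^ (l+1) * ((t+1).choose (l+1) : ℤ)) = -1 := by
  rw [← Finset.sum_subset (Finset.range_subset_range.2 hM)
    (by intro l _ hl; rw [mem_range, not_lt] at hl
        rw [Nat.choose_eq_zero_of_lt (by omega : t + 1 < l + 1)]; simp)]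
  have h := Int.alternating_sum_range_choose (n := t+1)
  rw [if_neg (by omega)] at h
  rw [Finset.sum_range_succ'] at h
  simp only [pow_zero, Nat.choose_zero_right, Nat.cast_one, one_mul] at h
  linarith

/-- The central identity. -/
lemma core (m i j : ℕ) (hi : i < m) (hj : j < m) :
    ∑ l ∈ range (m-1), (aN i (l+1) * aN j l - aN i l * aN j (l+1)) = q i j := by
  have anti : ∀ i' j', ∑ l ∈ range (m-1), (aN i' (l+1) * aN j' l - aN i' l * aN j' (l+1))
      = -∑ l ∈ range (m-1), (aN j' (l+1) * aN i' l - aN j' l * aN i' (l+1)) := by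
    intro i' j'
    rw [← Finset.sum_neg_distrib]
    exact Finset.sum_congr rfl fun l _ => by ring
  have qanti : ∀ i' j', q i' j' = - q j' i' := by
    intro i' j'; simp only [q, add_comm i' j']; ring
  -- case B: i = 0, j = t+1
  have caseB : ∀ t, t + 1 < m →
      ∑ l ∈ range (m-1), (aN 0 (l+1) * aN (t+1) l - aN 0 l * aN (t+1) (l+1)) = -1 := by
    intro t ht
    have : ∀ l, aN 0 (l+1) * aN (t+1) l - aN 0 l * aN (t+1) (l+1)
        = (-1:ℤ)^(l+1) * (((t+1)-1).choose l + ((t+1)-1).choose (l+1) : ℤ) := by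
      intro l
      simp only [aN, if_pos rfl, if_neg (Nat.succ_ne_zero t)]
      push_cast
      rw [pow_succ]
      ring
    rw [Finset.sum_congr rfl fun l _ => this l]
    simp only [Nat.add_sub_cancel]
    have : ∀ l, ((t.choose l : ℤ) + (t.choose (l+1) : ℤ)) = ((t+1).choose (l+1) : ℤ) := by
      intro l; rw [Nat.choose_succ_succ]; push_cast; ring
    rw [Finset.sum_congr rfl fun l _ => by rw [this l]]
    exact alt_sum t (m-1) (by omega)
  rcases Nat.eq_zero_or_pos i with hi0 | hip
  · rcases Nat.eq_zero_or_pos j with hj0 | hjp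
    · subst hi0; subst hj0
      rw [Finset.sum_congr rfl fun l _ => (by ring :
        aN 0 (l+1) * aN 0 l - aN 0 l * aN 0 (l+1) = 0)]
      simp [q]
    · subst hi0
      obtain ⟨t, rfl⟩ : ∃ t, j = t + 1 := ⟨j - 1, by omega⟩
      rw [caseB t hj]
      simp only [q]
      rw [show 0 + (t+1) - 1 = t by omega, Nat.choose_eq_zero_of_lt (by omega : t < t+1)]
      simp
  · rcases Nat.eq_zero_or_pos j with hj0 | hjp
    · subst hj0
      obtain ⟨s, rfl⟩ : ∃ s, i = s + 1 := ⟨i - 1, by omega⟩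
      rw [anti, caseB s hi, qanti]
      simp only [q]
      rw [show 0 + (s+1) - 1 = s by omega, Nat.choose_eq_zero_of_lt (by omega : s < s+1)]
      simp
    · obtain ⟨s, rfl⟩ : ∃ s, i = s + 1 := ⟨i - 1, by omega⟩
      obtain ⟨t, rfl⟩ : ∃ t, j = t + 1 := ⟨j - 1, by omega⟩
      have e1 : ∀ l, aN (s+1) (l+1) * aN (t+1) l - aN (s+1) l * aN (t+1) (l+1)
          = (s.choose (l+1) : ℤ) * (t.choose l : ℤ) - (t.choose (l+1) : ℤ) * (s.choose l : ℤ) := by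
        intro l
        simp only [aN, if_neg (Nat.succ_ne_zero s), if_neg (Nat.succ_ne_zero t),
          Nat.add_sub_cancel]
        ring
      rw [Finset.sum_congr rfl fun l _ => e1 l, Finset.sum_sub_distrib,
        vand s t (m-1) (by omega), vand t s (m-1) (by omega)]
      simp only [q]
      rw [show s + 1 + (t + 1) - 1 = s + t + 1 by omega]
      have p1 : (s + t + 1).choose (t + 1) = (s+t).choose t + (s+t).choose (t+1) :=
        Nat.choose_succ_succ _ _
      have p2 : (s + t + 1).choose (s + 1) = (s+t).choose s + (s+t).choose (s+1) :=
        Nat.choose_succ_succ _ _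
      have p3 : (s + t).choose t = (s + t).choose s := by
        rw [← Nat.choose_symm (by omega : t ≤ s + t)]
        congr 1; omega
      rw [show t + s = s + t by omega, p1, p2, p3]
      push_cast [p1, p2]
      ring



lemma sN_eq (k l : ℕ) : sN k l =
    (if k = l + 1 then (1:ℤ) else 0) + (if k = l - 1 then (if 1 ≤ l then (-1:ℤ) else 0) else 0) := by
  simp only [sN]; split_ifs <;> omega

lemma inner_sum (m i l : ℕ) (hl : l < m) :
    ∑ k ∈ range m, aN i k * sN k l
      = (if l + 1 < m then aN i (l+1) else 0) - (if 1 ≤ l then aN i (l-1) else 0) := by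
  have : ∀ k, aN i k * sN k l
      = (if k = l + 1 then aN i k else 0)
        + (if k = l - 1 then aN i k * (if 1 ≤ l then (-1:ℤ) else 0) else 0) := by
    intro k
    rw [sN_eq]
    split_ifs <;> ring
  rw [Finset.sum_congr rfl fun k _ => this k, Finset.sum_add_distrib,
    Finset.sum_ite_eq' (range m) (l+1) (fun k => aN i k),
    Finset.sum_ite_eq' (range m) (l-1) (fun k => aN i k * (if 1 ≤ l then (-1:ℤ) else 0))]
  simp only [mem_range]
  rw [if_pos (by omega : l - 1 < m)]
  split_ifs <;> ring

lemma key_reduce (m i j : ℕ) (hm : 1 ≤ m) (hj : j < m) :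
    ∑ l ∈ range m, (∑ k ∈ range m, aN i k * sN k l) * aN j l
      = ∑ l ∈ range (m-1), (aN i (l+1) * aN j l - aN i l * aN j (l+1)) := by
  rw [Finset.sum_congr rfl fun l hl => by
    rw [inner_sum m i l (mem_range.1 hl)]]
  have expand : ∀ l,
      ((if l + 1 < m then aN i (l+1) else 0) - (if 1 ≤ l then aN i (l-1) else 0)) * aN j l
      = (if l + 1 < m then aN i (l+1) * aN j l else 0)
        - (if 1 ≤ l then aN i (l-1) * aN j l else 0) := by
    intro l; split_ifs <;> ring
  rw [Finset.sum_congr rfl fun l _ => expand l, Finset.sum_sub_distrib]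
  conv_rhs => rw [Finset.sum_sub_distrib]
  congr 1
  · have hs : ∑ l ∈ range (m-1), (if l + 1 < m then aN i (l+1) * aN j l else 0)
        = ∑ l ∈ range m, (if l + 1 < m then aN i (l+1) * aN j l else 0) :=
      Finset.sum_subset (Finset.range_subset_range.2 (by omega : m - 1 ≤ m))
        (fun x hx hx2 => by rw [mem_range] at hx hx2; rw [if_neg (by omega)])
    rw [← hs]
    refine Finset.sum_congr rfl fun l hl => ?_
    rw [mem_range] at hl; rw [if_pos (by omega)]
  · obtain ⟨M, rfl⟩ : ∃ M, m = M + 1 := ⟨m - 1, by omega⟩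
    rw [Finset.sum_range_succ']
    simp only [Nat.add_sub_cancel, Nat.le_refl, if_pos, Nat.le_add_left]
    rw [if_neg (by omega : ¬ 1 ≤ 0)]
    simp



lemma lf_eq (i x : ℕ) : lfN i x =
    (if x = i then (1:ℤ) else 0)
      + (if x = i - 2 then (if 2 ≤ i ∧ i % 2 = 0 then (-1:ℤ) else 0) else 0) := by
  simp only [lfN]; split_ifs <;> omega

lemma pick_lf (m i : ℕ) (hi : i < m) (f : ℕ → ℤ) :
    ∑ x ∈ range m, lfN i x * f x
      = f i + (if 2 ≤ i ∧ i % 2 = 0 then (-1:ℤ) else 0) * f (i - 2) := by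
  have : ∀ x, lfN i x * f x
      = (if x = i then f x else 0)
        + (if x = i - 2 then (if 2 ≤ i ∧ i % 2 = 0 then (-1:ℤ) else 0) * f x else 0) := by
    intro x; rw [lf_eq]; split_ifs <;> ring
  rw [Finset.sum_congr rfl fun x _ => this x, Finset.sum_add_distrib,
    Finset.sum_ite_eq' (range m) i f,
    Finset.sum_ite_eq' (range m) (i - 2)
      (fun x => (if 2 ≤ i ∧ i % 2 = 0 then (-1:ℤ) else 0) * f x)]
  simp only [mem_range]
  rw [if_pos hi, if_pos (by omega : i - 2 < m)]

set_option maxHeartbeats 2000000 in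
lemma s_fact (m k l : ℕ) (hk : k < m) (hl : l < m) :
    ∑ y ∈ range m, (∑ x ∈ range m, lfN k x * jpN x y) * lfN l y = sN k l := by
  have h1 : ∀ y, (∑ x ∈ range m, lfN k x * jpN x y)
      = jpN k y + (if 2 ≤ k ∧ k % 2 = 0 then (-1:ℤ) else 0) * jpN (k-2) y := fun y =>
    pick_lf m k hk _
  rw [Finset.sum_congr rfl fun y _ => by rw [h1 y]]
  rw [Finset.sum_congr rfl fun y _ => (mul_comm _ (lfN l y))]
  rw [pick_lf m l hl _]
  simp only [jpN, sN]
  split_ifs <;> omega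

lemma vf_eq (k l : ℕ) : vfN k l =
    (if k = l then (1:ℤ) else 0) + (if k = l - 1 then (if 1 ≤ l then (1:ℤ) else 0) else 0) := by
  simp only [vfN]; split_ifs <;> omega

lemma av_eq_w (m i l : ℕ) (hl : l < m) :
    ∑ k ∈ range m, aN i k * vfN k l = wN i l := by
  have : ∀ k, aN i k * vfN k l
      = (if k = l then aN i k else 0)
        + (if k = l - 1 then (if 1 ≤ l then (1:ℤ) else 0) * aN i k else 0) := by
    intro k; rw [vf_eq]; split_ifs <;> ring
  rw [Finset.sum_congr rfl fun k _ => this k, Finset.sum_add_distrib,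
    Finset.sum_ite_eq' (range m) l (fun k => aN i k),
    Finset.sum_ite_eq' (range m) (l - 1) (fun k => (if 1 ≤ l then (1:ℤ) else 0) * aN i k)]
  simp only [mem_range]
  rw [if_pos hl, if_pos (by omega : l - 1 < m)]
  rcases Nat.eq_zero_or_pos i with rfl | hip
  · cases l with
    | zero => simp [aN, wN]
    | succ r =>
      have e1 : aN 0 (r+1) = (-1:ℤ)^(r+1) := by simp [aN]
      have e2 : aN 0 (r+1-1) = (-1:ℤ)^r := by simp [aN]
      have e3 : wN 0 (r+1) = 0 := by simp [wN]
      rw [e1, e2, e3, if_pos (by omega : 1 ≤ r+1), pow_succ]; ring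
  · obtain ⟨u, rfl⟩ : ∃ u, i = u + 1 := ⟨i - 1, by omega⟩
    cases l with
    | zero => simp [aN, wN]
    | succ r =>
      have e1 : aN (u+1) (r+1) = (u.choose (r+1) : ℤ) := by simp [aN]
      have e2 : aN (u+1) (r+1-1) = (u.choose r : ℤ) := by simp [aN]
      rw [e1, e2, if_pos (by omega : 1 ≤ r+1)]
      simp only [wN, if_neg (Nat.succ_ne_zero u)]
      rw [Nat.choose_succ_succ]; push_cast; ring



lemma e_coe (n : ℕ) (a : Fin 2) (b : Fin n) : ((e n (a, b)) : ℕ) = (a : ℕ) + 2 * (b : ℕ) := by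
  simp [e, finProdFinEquiv, Equiv.prodComm, finCongr]

lemma jp_matrix (n : ℕ) :
    (Matrix.of fun k l : Fin (2 * n) => jpN k l)
      = (Matrix.blockDiagonal fun _ : Fin n => Matrix.of jp2).reindex (e n) (e n) := by
  apply Matrix.ext
  intro i j
  obtain ⟨p, rfl⟩ : ∃ p, i = e n p := ⟨(e n).symm i, ((e n).apply_symm_apply i).symm⟩
  obtain ⟨q, rfl⟩ : ∃ q, j = e n q := ⟨(e n).symm j, ((e n).apply_symm_apply j).symm⟩
  obtain ⟨a, b⟩ := p
  obtain ⟨c, d⟩ := q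
  rw [Matrix.reindex_apply, Matrix.submatrix_apply, Equiv.symm_apply_apply,
    Equiv.symm_apply_apply, Matrix.of_apply, Matrix.blockDiagonal_apply, e_coe, e_coe]
  have ha : (a : ℕ) < 2 := a.2
  have hc : (c : ℕ) < 2 := c.2
  simp only [jpN, jp2, Matrix.of_apply, Fin.ext_iff, Fin.val_one, Fin.val_zero]
  split_ifs <;> omega

lemma det_jp (n : ℕ) : (Matrix.of fun k l : Fin (2 * n) => jpN k l).det = 1 := by
  rw [jp_matrix, Matrix.det_reindex_self, Matrix.det_blockDiagonal]
  have : (Matrix.of jp2).det = 1 := by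
    rw [Matrix.det_fin_two]
    simp [jp2]
  simp [this]

lemma det_lf (m : ℕ) : (Matrix.of fun i k : Fin m => lfN i k).det = 1 := by
  rw [Matrix.det_of_lowerTriangular _ (by
    intro i j hij
    have h : (i : ℕ) < (j : ℕ) := hij
    simp only [Matrix.of_apply, lfN]
    rw [if_neg (by omega), if_neg (by omega)])]
  refine Finset.prod_eq_one fun i _ => by simp [lfN]

lemma det_vf (m : ℕ) : (Matrix.of fun i k : Fin m => vfN i k).det = 1 := by
  rw [Matrix.det_of_upperTriangular (by
    intro i j hij
    have h : (j : ℕ) < (i : ℕ) := hij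
    simp only [Matrix.of_apply, vfN]
    rw [if_neg (by omega)])]
  refine Finset.prod_eq_one fun i _ => by simp [vfN]

lemma det_w (m : ℕ) : (Matrix.of fun i k : Fin m => wN i k).det = 1 := by
  rw [Matrix.det_of_lowerTriangular _ (by
    intro i j hij
    have h : (i : ℕ) < (j : ℕ) := hij
    simp only [Matrix.of_apply, wN]
    rcases Nat.eq_zero_or_pos (i : ℕ) with h0 | h0
    · rw [if_pos h0, if_neg (by omega)]
    · rw [if_neg (by omega), Nat.choose_eq_zero_of_lt (by omega)]; simp)]
  refine Finset.prod_eq_one fun i _ => ?_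
  simp only [Matrix.of_apply, wN]
  rcases Nat.eq_zero_or_pos (i : ℕ) with h0 | h0
  · rw [if_pos h0, if_pos h0]
  · rw [if_neg (by omega), Nat.choose_self]; simp


lemma triple_apply (x y z : ℕ → ℕ → ℤ) (m : ℕ) (i j : Fin m) :
    ((Matrix.of fun i k : Fin m => x i k) * (Matrix.of fun k l : Fin m => y k l) *
      (Matrix.of fun i k : Fin m => z i k)ᵀ) i j
      = ∑ l ∈ range m, (∑ k ∈ range m, x i k * y k l) * z j l := by
  simp only [Matrix.mul_apply, Matrix.transpose_apply, Matrix.of_apply]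
  rw [Fin.sum_univ_eq_sum_range (fun l => (∑ k : Fin m, x ↑i ↑k * y ↑k l) * z ↑j l) m]
  exact Finset.sum_congr rfl fun l _ => by
    rw [Fin.sum_univ_eq_sum_range (fun k => x ↑i k * y k l) m]

lemma s_eq_LJL (n : ℕ) :
    (Matrix.of fun k l : Fin (2 * n) => sN k l)
      = (Matrix.of fun i k : Fin (2 * n) => lfN i k)
        * (Matrix.of fun k l : Fin (2 * n) => jpN k l)
        * (Matrix.of fun i k : Fin (2 * n) => lfN i k)ᵀ := by
  apply Matrix.ext
  intro i j
  rw [triple_apply lfN jpN lfN, Matrix.of_apply]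
  exact (s_fact (2 * n) i j i.2 j.2).symm

lemma det_s (n : ℕ) : (Matrix.of fun k l : Fin (2 * n) => sN k l).det = 1 := by
  rw [s_eq_LJL, Matrix.det_mul, Matrix.det_mul, Matrix.det_transpose, det_lf, det_jp]
  ring

lemma a_mul_v (m : ℕ) :
    (Matrix.of fun i k : Fin m => aN i k) * (Matrix.of fun i k : Fin m => vfN i k)
      = Matrix.of fun i k : Fin m => wN i k := by
  apply Matrix.ext
  intro i j
  rw [Matrix.mul_apply]
  simp only [Matrix.of_apply]
  rw [Fin.sum_univ_eq_sum_range (fun k => aN ↑i k * vfN k ↑j) m]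
  exact av_eq_w m i j j.2

lemma det_a (m : ℕ) : (Matrix.of fun i k : Fin m => aN i k).det = 1 := by
  have h := congrArg Matrix.det (a_mul_v m)
  rw [Matrix.det_mul, det_vf, det_w, mul_one] at h
  exact h

lemma pascal_matrix_eq (n : ℕ) :
    (Matrix.of fun i j : Fin (2 * n) =>
      pascalRec (fun k => if k = 0 then (0 : ℤ) else 1)
        (fun k => -(if k = 0 then (0 : ℤ) else 1)) i j)
      = (Matrix.of fun i k : Fin (2 * n) => aN i k)
        * (Matrix.of fun k l : Fin (2 * n) => sN k l)
        * (Matrix.of fun i k : Fin (2 * n) => aN i k)ᵀ := by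
  apply Matrix.ext
  intro i j
  rw [triple_apply aN sN aN, Matrix.of_apply, pascal_eq,
    key_reduce (2 * n) i j (by have := i.2; omega) j.2, core (2 * n) i j i.2 j.2]

end Stmt12Aux

theorem stmt_12 (n : ℕ) :
    (Matrix.of fun i j : Fin (2 * n) =>
      pascalRec (fun k => if k = 0 then (0 : ℤ) else 1)
        (fun k => -(if k = 0 then (0 : ℤ) else 1)) i j).det = 1 := by
  rw [Stmt12Aux.pascal_matrix_eq, Matrix.det_mul, Matrix.det_mul, Matrix.det_transpose,
    Stmt12Aux.det_a, Stmt12Aux.det_s]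
  ring
end

section
/- The symplectic generalized Pascal matrices P_{α,−α}(2n) associated to the sequence α = (0,1,2,3,4,5,…) (i.e., α_k = k) have determinant 1 for every natural integer n. -/
namespace Stmt13Aux

open Matrix

/-- The concrete Pascal-type array. -/
noncomputable def p : ℕ → ℕ → ℤ := pascalRec (fun k => (k : ℤ)) (fun k => -(k : ℤ))

lemma p_right (i : ℕ) : p i 0 = (i : ℤ) := by cases i <;> simp [p, pascalRec]

lemma p_left (j : ℕ) : p 0 j = -(j : ℤ) := by cases j <;> simp [p, pascalRec]

lemma p_rec (i j : ℕ) : p (i + 1) (j + 1) = p i (j + 1) + p (i + 1) j := by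
  simp [p, pascalRec]

/-- The matrix of interest. -/
noncomputable def A (m : ℕ) : Matrix (Fin m) (Fin m) ℤ :=
  Matrix.of fun i j => p i j

/-- The elimination matrix (row combination coefficients). -/
def Lf : ℕ → ℕ → ℤ
  | 0, j => if j = 0 then 1 else 0
  | 1, j => (if j = 1 then 1 else 0) + (if j = 0 then -1 else 0)
  | (v+2), j => (if j = v+2 then 1 else 0) + (if j = v+1 then -2 else 0)
      + (if j = v then 1 else 0) + (if j = 0 then 1 else 0)

noncomputable def LM (N : ℕ) : Matrix (Fin N) (Fin N) ℤ :=
  Matrix.of fun i j => Lf i j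

/-- Result of the row combination applied to a vector. -/
def g : ℕ → (ℕ → ℤ) → ℤ
  | 0, f => f 0
  | 1, f => f 1 - f 0
  | (v+2), f => f (v+2) - 2 * f (v+1) + f v + f 0

lemma sum_ite_coe {N : ℕ} (v : ℕ) (hv : v < N) (f : Fin N → ℤ) :
    (∑ k : Fin N, if (k : ℕ) = v then f k else 0) = f ⟨v, hv⟩ := by
  classical
  have h : ∀ k : Fin N, (if (k : ℕ) = v then f k else 0)
      = (if k = ⟨v, hv⟩ then f k else 0) := by
    intro k
    by_cases hk : (k : ℕ) = v
    · rw [if_pos hk, if_pos (Fin.ext hk)]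
    · rw [if_neg hk, if_neg (fun h' => hk (by rw [h']))]
  rw [Finset.sum_congr rfl fun k _ => h k, Finset.sum_ite_eq' Finset.univ (⟨v, hv⟩ : Fin N) f,
    if_pos (Finset.mem_univ _)]

lemma Lcomb {N : ℕ} (i : Fin N) (f : ℕ → ℤ) :
    (∑ k : Fin N, Lf (i : ℕ) (k : ℕ) * f (k : ℕ)) = g (i : ℕ) f := by
  obtain ⟨iv, hiv⟩ := i
  match iv with
  | 0 =>
    simp only [Lf, g, ite_mul, one_mul, zero_mul]
    rw [sum_ite_coe 0 hiv]
  | 1 =>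
    simp only [Lf, g, add_mul, ite_mul, one_mul, zero_mul, neg_one_mul]
    rw [Finset.sum_add_distrib, sum_ite_coe 1 hiv, sum_ite_coe 0 (by omega)]
    push_cast
    ring
  | (v+2) =>
    simp only [Lf, g, add_mul, ite_mul, one_mul, zero_mul]
    rw [Finset.sum_add_distrib, Finset.sum_add_distrib, Finset.sum_add_distrib,
      sum_ite_coe (v+2) hiv, sum_ite_coe (v+1) (by omega), sum_ite_coe v (by omega),
      sum_ite_coe 0 (by omega)]
    push_cast
    ring

/-- The doubly-combined entries. -/
noncomputable def F (iv jv : ℕ) : ℤ := g jv (fun v => g iv (fun u => p u v))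

def K : Matrix (Fin 2) (Fin 2) ℤ := !![0, -1; 1, 0]

lemma F_succ_succ (a b : ℕ) : F (a+2) (b+2) = p a b := by
  have e1 := p_rec (a+1) (b+1)
  have e2 := p_rec (a+1) b
  have e3 := p_rec a (b+1)
  have e4 := p_rec a b
  have z2 := p_left (b+2); have z1 := p_left (b+1); have z0 := p_left b
  have w2 := p_right (a+2); have w1 := p_right (a+1); have w0 := p_right a
  have h00 := p_left 0
  simp only [F, g]
  push_cast at z2 z1 z0 w2 w1 w0 h00 ⊢
  linarith

lemma F_ll (a b : Fin 2) : F a b = K a b := by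
  have e := p_rec 0 0
  have z0 := p_left 0; have z1 := p_left 1; have w0 := p_right 0; have w1 := p_right 1
  push_cast at e z0 z1 w0 w1
  fin_cases a <;> fin_cases b <;> simp [F, g, K] <;> linarith

lemma F_zero_succ (b : ℕ) : F 0 (b+2) = 0 := by
  have z2 := p_left (b+2); have z1 := p_left (b+1); have z0 := p_left b
  have h00 := p_left 0
  simp only [F, g]
  push_cast at z2 z1 z0 h00 ⊢
  linarith

lemma F_one_succ (b : ℕ) : F 1 (b+2) = 0 := by
  have e1 := p_rec 0 (b+1)
  have e2 := p_rec 0 b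
  have z2 := p_left (b+2); have z1 := p_left (b+1); have z0 := p_left b
  have h00 := p_left 0; have h10 := p_right 1
  simp only [F, g]
  push_cast at *
  linarith

lemma F_succ_zero (a : ℕ) : F (a+2) 0 = 0 := by
  have w2 := p_right (a+2); have w1 := p_right (a+1); have w0 := p_right a
  have h00 := p_left 0
  simp only [F, g]
  push_cast at *
  linarith

lemma F_succ_one (a : ℕ) : F (a+2) 1 = 0 := by
  have e1 := p_rec (a+1) 0
  have e2 := p_rec a 0
  have w2 := p_right (a+2); have w1 := p_right (a+1); have w0 := p_right a
  have z1 := p_left 1; have h00 := p_left 0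
  simp only [F, g]
  push_cast at *
  linarith

lemma conj_eq (m : ℕ) :
    LM (2+m) * A (2+m) * (LM (2+m))ᵀ =
      (Matrix.fromBlocks K 0 0 (A m)).submatrix finSumFinEquiv.symm finSumFinEquiv.symm := by
  ext i j
  have h1 : ∀ l : Fin (2+m), (LM (2+m) * A (2+m)) i l = g (i : ℕ) (fun u => p u (l : ℕ)) := by
    intro l
    rw [Matrix.mul_apply]
    simp only [LM, A, Matrix.of_apply]
    exact Lcomb i (fun u => p u (l : ℕ))
  have hL : (LM (2+m) * A (2+m) * (LM (2+m))ᵀ) i j = F (i : ℕ) (j : ℕ) := by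
    rw [Matrix.mul_apply]
    have h2 : ∀ l : Fin (2+m), (LM (2+m) * A (2+m)) i l * (LM (2+m))ᵀ l j
        = Lf (j : ℕ) (l : ℕ) * g (i : ℕ) (fun u => p u (l : ℕ)) := by
      intro l
      rw [h1 l, Matrix.transpose_apply, mul_comm]
      rfl
    rw [Finset.sum_congr rfl fun l _ => h2 l]
    simp only [F]
    exact Lcomb j (fun v => g (i : ℕ) (fun u => p u v))
  rw [hL, Matrix.submatrix_apply]
  induction i using Fin.addCases with
  | left il =>
    induction j using Fin.addCases with
    | left jl =>
      simp only [finSumFinEquiv_symm_apply_castAdd, Matrix.fromBlocks_apply₁₁,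
        Fin.coe_castAdd]
      exact F_ll il jl
    | right jr =>
      simp only [finSumFinEquiv_symm_apply_castAdd, finSumFinEquiv_symm_apply_natAdd,
        Matrix.fromBlocks_apply₁₂, Fin.coe_castAdd, Fin.coe_natAdd, Matrix.zero_apply]
      rw [Nat.add_comm 2 (jr : ℕ)]
      fin_cases il
      · exact F_zero_succ jr
      · exact F_one_succ jr
  | right ir =>
    induction j using Fin.addCases with
    | left jl =>
      simp only [finSumFinEquiv_symm_apply_castAdd, finSumFinEquiv_symm_apply_natAdd,
        Matrix.fromBlocks_apply₂₁, Fin.coe_castAdd, Fin.coe_natAdd, Matrix.zero_apply]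
      rw [Nat.add_comm 2 (ir : ℕ)]
      fin_cases jl
      · exact F_succ_zero ir
      · exact F_succ_one ir
    | right jr =>
      simp only [finSumFinEquiv_symm_apply_natAdd, Matrix.fromBlocks_apply₂₂,
        Fin.coe_natAdd]
      rw [Nat.add_comm 2 (ir : ℕ), Nat.add_comm 2 (jr : ℕ)]
      exact F_succ_succ ir jr

lemma Lf_tri (x y : ℕ) (h : x < y) : Lf x y = 0 := by
  rcases x with _ | _ | v
  · have h1 : y ≠ 0 := by omega
    simp [Lf, h1]
  · have h1 : y ≠ 1 := by omega
    have h2 : y ≠ 0 := by omega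
    simp [Lf, h1, h2]
  · have h1 : y ≠ v+2 := by omega
    have h2 : y ≠ v+1 := by omega
    have h3 : y ≠ v := by omega
    have h4 : y ≠ 0 := by omega
    simp [Lf, h1, h2, h3, h4]

lemma Lf_diag (x : ℕ) : Lf x x = 1 := by
  rcases x with _ | _ | v
  · simp [Lf]
  · simp [Lf]
  · have h1 : v+2 ≠ v+1 := by omega
    have h2 : v+2 ≠ v := by omega
    have h3 : v+2 ≠ 0 := by omega
    simp [Lf, h1, h2, h3]

lemma det_LM (N : ℕ) : (LM N).det = 1 := by
  have htri : (LM N).BlockTriangular OrderDual.toDual := by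
    intro i j hij
    have hn : i < j := hij
    exact Lf_tri (i : ℕ) (j : ℕ) hn
  rw [Matrix.det_of_lowerTriangular _ htri]
  have hdiag : ∀ i : Fin N, LM N i i = 1 := fun i => Lf_diag (i : ℕ)
  simp [hdiag]

lemma det_K : K.det = 1 := by
  simp [K, Matrix.det_fin_two]

lemma key (m : ℕ) : (A (2+m)).det = (A m).det := by
  have h := congrArg Matrix.det (conj_eq m)
  rw [Matrix.det_mul, Matrix.det_mul, det_LM, Matrix.det_transpose, det_LM, one_mul, mul_one,
    Matrix.det_submatrix_equiv_self, Matrix.det_fromBlocks_zero₂₁, det_K, one_mul] at h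
  exact h

lemma main (n : ℕ) : (A (2*n)).det = 1 := by
  induction n with
  | zero =>
    have : (2 * 0 : ℕ) = 0 := rfl
    rw [this]
    exact Matrix.det_fin_zero
  | succ k ih =>
    rw [show 2*(k+1) = 2 + 2*k by ring, key, ih]

end Stmt13Aux

theorem stmt_13 (n : ℕ) :
    (Matrix.of fun i j : Fin (2 * n) =>
      pascalRec (fun k => (k : ℤ)) (fun k => -(k : ℤ)) i j).det = 1 := by
  exact Stmt13Aux.main n
end

section
/- The entries of the infinite antisymmetric generalized Pascal matrix P_{(0,1,1,1,…),−(0,1,1,1,…)} satisfy p_{i,j} = C(i+j−1, j) − C(i+j−1, j−1), where by convention C(−1,−1) = C(−1,0) = 1 and C(k,−1) = 0 for k ≥ 0. -/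
/-- Binomial coefficient on integer arguments with the conventions
`C(-1,-1) = C(-1,0) = 1` and `C(k,-1) = 0` for `k ≥ 0`. -/
def intChoose (a b : ℤ) : ℤ :=
  if a = -1 ∧ (b = -1 ∨ b = 0) then 1
  else if b = -1 then 0
  else if 0 ≤ a ∧ 0 ≤ b then (a.toNat.choose b.toNat : ℤ)
  else 0

lemma intChoose_nat (a b : ℕ) : intChoose a b = a.choose b := by
  simp only [intChoose]
  rw [if_neg (by omega), if_neg (by omega), if_pos ⟨by omega, by omega⟩]
  simp

lemma intChoose_neg_one (a : ℕ) : intChoose a (-1) = 0 := by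
  simp only [intChoose]
  rw [if_neg (by omega)]
  norm_num

theorem stmt_15 (i j : ℕ) :
    pascalRec (fun k => if k = 0 then (0 : ℤ) else 1)
        (fun k => -(if k = 0 then (0 : ℤ) else 1)) i j =
      intChoose ((i : ℤ) + j - 1) j - intChoose ((i : ℤ) + j - 1) ((j : ℤ) - 1) := by
  induction i generalizing j with
  | zero =>
    cases j with
    | zero => simp [pascalRec, intChoose]
    | succ j =>
      simp only [pascalRec]
      rw [if_neg (by omega)]
      have h1 : ((0:ℕ):ℤ) + (j+1 : ℕ) - 1 = (j : ℕ) := by push_cast; ring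
      have h2 : ((j+1 : ℕ) : ℤ) - 1 = (j : ℕ) := by push_cast; ring
      rw [h1, h2, intChoose_nat, intChoose_nat]
      have : ((j+1 : ℕ) : ℤ) = ((j+1 : ℕ) : ℤ) := rfl
      norm_cast
      rw [Nat.choose_self, Nat.choose_eq_zero_of_lt (by omega)]
      decide
  | succ i ih =>
    induction j with
    | zero =>
      simp only [pascalRec]
      rw [if_neg (by omega)]
      have h1 : ((i+1 : ℕ) : ℤ) + (0:ℕ) - 1 = (i : ℕ) := by push_cast; ring
      have h2 : ((0:ℕ) : ℤ) - 1 = -1 := by norm_num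
      rw [h1, h2, intChoose_nat, intChoose_neg_one]
      simp
    | succ j ihj =>
      simp only [pascalRec]
      rw [ih (j+1), ihj]
      have e1 : ((i:ℕ):ℤ) + (j+1 : ℕ) - 1 = ((i+j : ℕ) : ℤ) := by push_cast; ring
      have e2 : ((j+1 : ℕ):ℤ) - 1 = ((j:ℕ):ℤ) := by push_cast; ring
      have e3 : ((i+1 : ℕ):ℤ) + (j : ℕ) - 1 = ((i+j : ℕ) : ℤ) := by push_cast; ring
      have e4 : ((i+1 : ℕ):ℤ) + (j+1 : ℕ) - 1 = ((i+j+1 : ℕ) : ℤ) := by push_cast; ring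
      rw [e1, e2, e3, e4, intChoose_nat, intChoose_nat, intChoose_nat, intChoose_nat]
      cases j with
      | zero =>
        rw [show ((0:ℕ):ℤ) - 1 = -1 by norm_num, intChoose_neg_one]
        simp [Nat.choose]
      | succ j =>
        rw [show ((j+1:ℕ):ℤ) - 1 = ((j:ℕ):ℤ) by push_cast; ring, intChoose_nat]
        have c1 : (i + (j+1) + 1).choose (j + 1 + 1) = (i + (j+1)).choose (j + 1 + 1) + (i + (j+1)).choose (j + 1) := by
          rw [Nat.choose_succ_succ]; ring
        have c2 : (i + (j+1) + 1).choose (j + 1) = (i + (j+1)).choose (j + 1) + (i + (j+1)).choose j := by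
          rw [Nat.choose_succ_succ]; ring
        rw [c1, c2]
        push_cast
        ring
end

section
/- For the geometric sequence α = (0, 1, A, A², A³, …) (α_0 = 0, α_k = A^{k−1} for k ≥ 1), the symplectic matrix P_{α,−α}(2n) has determinant A^{2(n−1)} for all n ≥ 1. -/
open Finset
section Aux
variable {R : Type*} [CommRing R]

def pfF (A : R) : ℕ → ℕ → R
  | 0, k => if k = 0 then 1 else 0
  | 1, k => if k = 1 then 1 else 0
  | _ + 2, 0 => 0
  | i + 2, 1 => A * pfF A (i + 1) 1
  | i + 2, k + 2 => pfF A (i + 1) (k + 1) + pfF A (i + 1) (k + 2)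

theorem pfF_eq_zero (A : R) : ∀ i k, i < k → pfF A i k = 0
  | 0, k, h => by have : k ≠ 0 := by omega
                  simp [pfF, this]
  | 1, k, h => by have : k ≠ 1 := by omega
                  simp [pfF, this]
  | i + 2, 0, h => by omega
  | i + 2, 1, h => by omega
  | i + 2, k + 2, h => by
      rw [pfF, pfF_eq_zero A (i+1) (k+1) (by omega), pfF_eq_zero A (i+1) (k+2) (by omega),
        add_zero]

theorem pfF_zero (A : R) : ∀ i, pfF A (i + 1) 0 = 0
  | 0 => by simp [pfF]
  | i + 1 => rfl

theorem pfF_sum_ext (A : R) (i N : ℕ) (h : i + 1 ≤ N) (g : ℕ → R) :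
    ∑ k ∈ range N, pfF A i k * g k = ∑ k ∈ range (i + 1), pfF A i k * g k := by
  refine (Finset.sum_subset (Finset.range_subset_range.mpr h) fun k hk hk' => ?_).symm
  rw [pfF_eq_zero A i k (by simp at hk'; omega), zero_mul]

/-- the transfer operation on column vectors -/
def ptT (A : R) (y : ℕ → R) : ℕ → R
  | 0 => y 0
  | 1 => A * y 1 + y 2
  | k + 2 => y (k + 2) + y (k + 3)

theorem pfF_shift (A : R) (m N : ℕ) (hN : m + 4 ≤ N) (y : ℕ → R) :
    ∑ k ∈ range N, pfF A (m + 2) k * y k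
      = ∑ k ∈ range N, pfF A (m + 1) k * ptT A y k := by
  have key : ∑ k ∈ range (m+1), pfF A (m+1) (k+1) * y (k+2)
      = pfF A (m+1) 1 * y 2 + ∑ k ∈ range (m+1), pfF A (m+1) (k+2) * y (k+3) := by
    rw [Finset.sum_range_succ' (fun k => pfF A (m+1) (k+1) * y (k+2)) m,
        Finset.sum_range_succ (fun k => pfF A (m+1) (k+2) * y (k+3)) m,
        pfF_eq_zero A (m+1) (m+2) (by omega),
        show (∑ k ∈ range m, pfF A (m+1) (k+1+1) * y (k+1+2))
          = ∑ k ∈ range m, pfF A (m+1) (k+2) * y (k+3) from Finset.sum_congr rfl fun k _ => rfl]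
    ring
  have L : ∑ k ∈ range N, pfF A (m + 2) k * y k
      = ∑ k ∈ range (m+1), (pfF A (m+1) (k+1) + pfF A (m+1) (k+2)) * y (k+2)
        + A * pfF A (m+1) 1 * y 1 := by
    rw [pfF_sum_ext A (m+2) N (by omega),
      Finset.sum_range_succ' (fun k => pfF A (m+2) k * y k) (m+2),
      Finset.sum_range_succ' (fun k => pfF A (m+2) (k+1) * y (k+1)) (m+1),
      pfF_zero A (m+1),
      show (∑ k ∈ range (m+1), pfF A (m+2) (k+1+1) * y (k+1+1))
        = ∑ k ∈ range (m+1), (pfF A (m+1) (k+1) + pfF A (m+1) (k+2)) * y (k+2) from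
        Finset.sum_congr rfl fun k _ => by rw [show k+1+1 = k+2 from rfl, pfF],
      show pfF A (m+2) 1 = A * pfF A (m+1) 1 by rw [pfF]]
    ring
  have Rr : ∑ k ∈ range N, pfF A (m + 1) k * ptT A y k
      = ∑ k ∈ range (m+1), pfF A (m+1) (k+2) * (y (k+2) + y (k+3))
        + pfF A (m+1) 1 * (A * y 1 + y 2) := by
    rw [pfF_sum_ext A (m+1) N (by omega),
      Finset.sum_range_succ' (fun k => pfF A (m+1) k * ptT A y k) (m+1),
      Finset.sum_range_succ' (fun k => pfF A (m+1) (k+1) * ptT A y (k+1)) m,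
      pfF_zero A m,
      show (∑ k ∈ range m, pfF A (m+1) (k+1+1) * ptT A y (k+1+1))
        = ∑ k ∈ range m, pfF A (m+1) (k+2) * (y (k+2) + y (k+3)) from
        Finset.sum_congr rfl fun k _ => rfl,
      show (∑ k ∈ range (m+1), pfF A (m+1) (k+2) * (y (k+2) + y (k+3)))
        = ∑ k ∈ range m, pfF A (m+1) (k+2) * (y (k+2) + y (k+3)) by
        rw [Finset.sum_range_succ (fun k => pfF A (m+1) (k+2) * (y (k+2) + y (k+3))) m,
          pfF_eq_zero A (m+1) (m+2) (by omega)]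
        ring]
    show _ = _
    have : ptT A y 1 = A * y 1 + y 2 := rfl
    rw [this]
    ring
  rw [L, Rr]
  simp only [add_mul, mul_add]
  rw [Finset.sum_add_distrib, Finset.sum_add_distrib, key]
  ring

def pbB (A : R) (k : ℕ) : R := if k = 0 then 1 else A

def pcC (A : R) (j : ℕ) : ℕ → R
  | 0 => -(pfF A j 1)
  | k + 1 => pbB A k * pfF A j k - pbB A (k + 1) * pfF A j (k + 2)

def pG (A : R) (i j : ℕ) : R := ∑ k ∈ range (i + 1), pfF A i k * pcC A j k

theorem pfF_one (A : R) : ∀ i, pfF A (i + 1) 1 = A ^ i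
  | 0 => by simp [pfF]
  | i + 1 => by rw [show i + 1 + 1 = i + 2 from rfl, pfF, pfF_one A i, pow_succ]; ring

theorem pfF_diag (A : R) : ∀ i, pfF A i i = 1
  | 0 => by simp [pfF]
  | 1 => by simp [pfF]
  | i + 2 => by
      rw [pfF, pfF_diag A (i + 1), pfF_eq_zero A (i+1) (i+2) (by omega), add_zero]

theorem pcC_zero (A : R) (k : ℕ) : pcC A 0 k = if k = 1 then 1 else 0 := by
  match k with
  | 0 => simp [pcC, pfF]
  | 1 => simp [pcC, pbB, pfF]
  | k + 2 => simp [pcC, pbB, pfF, pfF_eq_zero A 0 (k+1) (by omega),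
      pfF_eq_zero A 0 (k+3) (by omega)]

theorem pcC_one (A : R) (k : ℕ) : pcC A 1 k = if k = 0 then -1 else if k = 2 then A else 0 := by
  match k with
  | 0 => simp [pcC, pfF]
  | 1 => simp [pcC, pbB, pfF]
  | 2 => simp [pcC, pbB, pfF]
  | k + 3 => simp [pcC, pbB, pfF_eq_zero A 1 (k+2) (by omega),
      pfF_eq_zero A 1 (k+4) (by omega)]

theorem pcC_I1 (A : R) (t s : ℕ) :
    pcC A (t + 2) (s + 3) = pcC A (t + 1) (s + 2) + pcC A (t + 1) (s + 3) := by
  show pbB A (s+2) * pfF A (t+2) (s+2) - pbB A (s+3) * pfF A (t+2) (s+4)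
    = (pbB A (s+1) * pfF A (t+1) (s+1) - pbB A (s+2) * pfF A (t+1) (s+3))
      + (pbB A (s+2) * pfF A (t+1) (s+2) - pbB A (s+3) * pfF A (t+1) (s+4))
  rw [show pfF A (t+2) (s+2) = pfF A (t+1) (s+1) + pfF A (t+1) (s+2) from by rw [pfF],
      show pfF A (t+2) (s+4) = pfF A (t+1) (s+3) + pfF A (t+1) (s+4) from by rw [pfF]]
  simp only [pbB]
  norm_num
  ring

theorem pcC_I2 (A : R) (t : ℕ) :
    A * pcC A (t + 2) 1 + pcC A (t + 2) 2
      = pcC A (t + 2) 1 + A * pcC A (t + 1) 1 + pcC A (t + 1) 2 := by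
  show A * (pbB A 0 * pfF A (t+2) 0 - pbB A 1 * pfF A (t+2) 2)
        + (pbB A 1 * pfF A (t+2) 1 - pbB A 2 * pfF A (t+2) 3)
      = (pbB A 0 * pfF A (t+2) 0 - pbB A 1 * pfF A (t+2) 2)
        + A * (pbB A 0 * pfF A (t+1) 0 - pbB A 1 * pfF A (t+1) 2)
        + (pbB A 1 * pfF A (t+1) 1 - pbB A 2 * pfF A (t+1) 3)
  rw [show pfF A (t+2) 0 = 0 from pfF_zero A (t+1),
      show pfF A (t+1) 0 = 0 from pfF_zero A t,
      show pfF A (t+2) 2 = pfF A (t+1) 1 + pfF A (t+1) 2 from by rw [pfF],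
      show pfF A (t+2) 3 = pfF A (t+1) 2 + pfF A (t+1) 3 from by rw [pfF],
      show pfF A (t+2) 1 = A * pfF A (t+1) 1 from by rw [pfF]]
  simp only [pbB]
  norm_num
  ring

theorem pG_ext (A : R) (i j N : ℕ) (h : i + 1 ≤ N) :
    pG A i j = ∑ k ∈ range N, pfF A i k * pcC A j k :=
  (pfF_sum_ext A i N h _).symm

theorem pG_col0 (A : R) (x : ℕ) : pG A x 0 = pfF A x 1 := by
  rw [pG]
  match x with
  | 0 => simp [pfF, pcC]
  | x + 1 =>
    rw [Finset.sum_eq_single 1]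
    · rw [pcC_zero]; simp
    · intro b _ hb
      rw [pcC_zero]; simp [hb]
    · intro h; exact absurd (Finset.mem_range.mpr (by omega)) h

theorem pG_col1 (A : R) (x : ℕ) : pG A x 1 = -(pfF A x 0) + A * pfF A x 2 := by
  have hpt : ∀ k ∈ range (x+1), pfF A x k * pcC A 1 k
      = (if k = 0 then -(pfF A x 0) else 0) + (if k = 2 then A * pfF A x 2 else 0) := by
    intro k _
    rw [pcC_one]
    match k with
    | 0 => simp
    | 1 => simp
    | 2 => simp [mul_comm]
    | s + 3 => simp
  rw [pG, Finset.sum_congr rfl hpt, Finset.sum_add_distrib,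
    Finset.sum_ite_eq' (range (x+1)) 0 (fun _ => -(pfF A x 0)),
    Finset.sum_ite_eq' (range (x+1)) 2 (fun _ => A * pfF A x 2)]
  simp only [Finset.mem_range]
  rcases Nat.lt_or_ge 2 (x+1) with h | h
  · rw [if_pos (by omega : (0:ℕ) < x+1), if_pos h]
  · rw [if_pos (by omega : (0:ℕ) < x+1), if_neg (by omega), pfF_eq_zero A x 2 (by omega)]
    ring

set_option maxHeartbeats 800000 in
theorem pG_rec (A : R) (i j : ℕ) : pG A (i+1) (j+1) = pG A i (j+1) + pG A (i+1) j := by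
  match i, j with
  | 0, j =>
    -- pG 1 x = pcC x 1, pG 0 x = pcC x 0
    have g1 : ∀ x, pG A 1 x = pcC A x 1 := by
      intro x
      rw [pG]
      simp [Finset.sum_range_succ, pfF]
    have g0 : ∀ x, pG A 0 x = pcC A x 0 := by
      intro x; rw [pG]; simp [pfF]
    rw [g1, g0, g1]
    match j with
    | 0 => simp [pcC, pbB, pfF]
    | t + 1 =>
      show pbB A 0 * pfF A (t+2) 0 - pbB A 1 * pfF A (t+2) 2
        = -(pfF A (t+2) 1) + (pbB A 0 * pfF A (t+1) 0 - pbB A 1 * pfF A (t+1) 2)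
      rw [show pfF A (t+2) 0 = 0 from pfF_zero A (t+1),
        show pfF A (t+1) 0 = 0 from pfF_zero A t,
        show pfF A (t+2) 2 = pfF A (t+1) 1 + pfF A (t+1) 2 from by rw [pfF],
        show pfF A (t+2) 1 = A * pfF A (t+1) 1 from by rw [pfF]]
      simp only [pbB]
      norm_num
      ring
  | m + 1, 0 =>
    rw [pG_col1, pG_col1, pG_col0,
      show pfF A (m+2) 0 = 0 from pfF_zero A (m+1),
      show pfF A (m+1) 0 = 0 from pfF_zero A m,
      show pfF A (m+2) 2 = pfF A (m+1) 1 + pfF A (m+1) 2 from by rw [pfF],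
      show pfF A (m+2) 1 = A * pfF A (m+1) 1 from by rw [pfF]]
    ring
  | m + 1, t + 1 =>
    set N := m + t + 8 with hNdef
    rw [pG_ext A (m+2) (t+2) N (by omega), pG_ext A (m+1) (t+2) N (by omega),
      pG_ext A (m+2) (t+1) N (by omega),
      pfF_shift A m N (by omega) (pcC A (t+2)),
      pfF_shift A m N (by omega) (pcC A (t+1)),
      ← Finset.sum_add_distrib]
    refine Finset.sum_congr rfl fun k _ => ?_
    match k with
    | 0 =>
      rw [show pfF A (m+1) 0 = 0 from pfF_zero A m]
      ring
    | 1 =>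
      show pfF A (m+1) 1 * (A * pcC A (t+2) 1 + pcC A (t+2) 2)
        = pfF A (m+1) 1 * pcC A (t+2) 1 + pfF A (m+1) 1 * (A * pcC A (t+1) 1 + pcC A (t+1) 2)
      rw [pcC_I2]
      ring
    | s + 2 =>
      show pfF A (m+1) (s+2) * (pcC A (t+2) (s+2) + pcC A (t+2) (s+3))
        = pfF A (m+1) (s+2) * pcC A (t+2) (s+2)
          + pfF A (m+1) (s+2) * (pcC A (t+1) (s+2) + pcC A (t+1) (s+3))
      rw [pcC_I1]
      ring


theorem peq (A : R) (α : ℕ → R) (hα0 : α 0 = 0) (hα : ∀ k, α (k + 1) = A ^ k) :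
    ∀ i j, pascalRec α (fun k => -α k) i j = pG A i j
  | i, 0 => by
    rw [show pascalRec α (fun k => -α k) i 0 = α i from by simp only [pascalRec], pG_col0]
    match i with
    | 0 => simp [pfF, hα0]
    | i + 1 => rw [pfF_one, hα]
  | 0, j + 1 => by
    rw [show pascalRec α (fun k => -α k) 0 (j+1) = -α (j+1) from by simp only [pascalRec], pG,
      show (0:ℕ) + 1 = 1 from rfl, Finset.sum_range_one]
    rw [show pfF A 0 0 = 1 from by simp [pfF],
      show pcC A (j+1) 0 = -(pfF A (j+1) 1) from rfl, pfF_one, hα]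
    ring
  | i + 1, j + 1 => by
    rw [show pascalRec α (fun k => -α k) (i+1) (j+1)
        = pascalRec α (fun k => -α k) i (j+1) + pascalRec α (fun k => -α k) (i+1) j from by
        rw [pascalRec],
      peq A α hα0 hα i (j+1), peq A α hα0 hα (i+1) j, pG_rec]

theorem detcast {a b : ℕ} (h : a = b) (f : ℕ → ℕ → R) :
    (Matrix.of fun i j : Fin a => f i j).det = (Matrix.of fun i j : Fin b => f i j).det := by
  subst h; rfl

def pvV (b : ℕ → R) (k l : ℕ) : R :=
  if k = l + 1 then b l else if l = k + 1 then -(b k) else 0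

theorem detstep (m : ℕ) (b b' : ℕ → R) (hb : ∀ t, b (t + 2) = b' t) :
    (Matrix.of fun i j : Fin (m + 2) => pvV b i j).det
      = b 0 * b 0 * (Matrix.of fun i j : Fin m => pvV b' i j).det := by
  set M : Matrix (Fin (m+2)) (Fin (m+2)) R := Matrix.of fun i j : Fin (m + 2) => pvV b i j
    with hM
  rw [Matrix.det_succ_column_zero, Finset.sum_eq_single (1 : Fin (m+2))]
  · have h10 : M 1 0 = b 0 := by simp [hM, pvV]
    rw [h10]
    set N := M.submatrix (1 : Fin (m+2)).succAbove Fin.succ with hN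
    rw [Matrix.det_succ_row_zero, Finset.sum_eq_single (0 : Fin (m+1))]
    · have h01 : N 0 0 = -(b 0) := by
        simp only [hN, Matrix.submatrix_apply, hM, Matrix.of_apply]
        rw [show (1 : Fin (m+2)).succAbove 0 = 0 from by
          rw [Fin.succAbove_of_castSucc_lt] <;> simp]
        simp [pvV]
      rw [h01]
      have hsub : N.submatrix Fin.succ (0 : Fin (m+1)).succAbove
          = Matrix.of fun i j : Fin m => pvV b' i j := by
        ext i j
        simp only [hN, hM, Matrix.submatrix_apply, Matrix.of_apply, Fin.succAbove_zero]
        rw [show (1 : Fin (m+2)).succAbove i.succ = i.succ.succ from by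
          apply Fin.succAbove_of_le_castSucc
          rw [Fin.le_def]
          simp]
        show pvV b (i + 1 + 1) (j + 1 + 1) = pvV b' i j
        simp only [pvV, ← hb]
        split_ifs <;> first | rfl | omega | (exfalso; omega)
      rw [hsub]
      simp only [Fin.val_zero, Fin.val_one, pow_zero, pow_one]
      ring
    · intro x _ hx
      have hx' : (x : ℕ) ≠ 0 := fun h => hx (Fin.ext h)
      have h0 : N 0 x = 0 := by
        simp only [hN, Matrix.submatrix_apply, hM, Matrix.of_apply]
        rw [show (1 : Fin (m+2)).succAbove 0 = 0 from by
          rw [Fin.succAbove_of_castSucc_lt] <;> simp]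
        simp only [Fin.val_zero, Fin.val_succ, pvV]
        simp only [show ¬ (0 = (x:ℕ) + 1 + 1) by omega, show ¬ ((x:ℕ) + 1 = 0 + 1) by omega, if_false]
      rw [h0]
      ring
    · intro h
      exact absurd (Finset.mem_univ _) h
  · intro x _ hx
    have hx' : (x : ℕ) ≠ 1 := fun h => hx (Fin.ext (by simpa using h))
    have h0 : M x 0 = 0 := by
      simp only [hM, Matrix.of_apply, Fin.val_zero, pvV]
      simp only [show ¬ ((x:ℕ) = 0 + 1) by omega, show ¬ (0 = (x:ℕ) + 1) by omega, if_false]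
    rw [h0]
    ring
  · intro h
    exact absurd (Finset.mem_univ _) h

theorem detconst (A : R) : ∀ m,
    (Matrix.of fun i j : Fin (2 * m) => pvV (fun _ => A) i j).det = A ^ (2 * m)
  | 0 => by
    rw [detcast (show 2 * 0 = 0 by ring)]
    simp
  | m + 1 => by
    rw [detcast (show 2 * (m + 1) = 2 * m + 2 by ring),
      detstep (2 * m) (fun _ => A) (fun _ => A) (fun _ => rfl), detconst A m]
    ring

theorem detW (A : R) (n : ℕ) (hn : 1 ≤ n) :
    (Matrix.of fun i j : Fin (2 * n) => pvV (pbB A) i j).det = A ^ (2 * (n - 1)) := by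
  obtain ⟨m, rfl⟩ : ∃ m, n = m + 1 := ⟨n - 1, by omega⟩
  rw [detcast (show 2 * (m + 1) = 2 * m + 2 by ring),
    detstep (2 * m) (pbB A) (fun _ => A) (fun t => by simp [pbB]), detconst A m]
  simp [pbB]

theorem pcC_sum (A : R) (j k N : ℕ) (hN : j + 1 ≤ N) :
    ∑ l ∈ range N, pvV (pbB A) k l * pfF A j l = pcC A j k := by
  match k with
  | 0 =>
    have hpt : ∀ l ∈ range N, pvV (pbB A) 0 l * pfF A j l
        = if l = 1 then -(pbB A 0) * pfF A j l else 0 := by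
      intro l _
      simp only [pvV]
      rw [if_neg (by omega)]
      split_ifs with h
      · ring
      · ring
    rw [Finset.sum_congr rfl hpt, Finset.sum_ite_eq' (range N) 1 (fun l => -(pbB A 0) * pfF A j l)]
    show _ = -(pfF A j 1)
    simp only [Finset.mem_range, pbB, if_pos rfl]
    split_ifs with h
    · ring
    · rw [pfF_eq_zero A j 1 (by omega)]
      ring
  | k + 1 =>
    have hpt : ∀ l ∈ range N, pvV (pbB A) (k + 1) l * pfF A j l
        = (if l = k then pbB A k * pfF A j l else 0)
          + (if l = k + 2 then -(pbB A (k+1)) * pfF A j l else 0) := by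
      intro l _
      by_cases hl : l = k
      · subst hl
        have e1 : pvV (pbB A) (l+1) l = pbB A l := by simp [pvV]
        rw [e1, if_pos rfl, if_neg (show ¬(l = l + 2) from by omega)]
        ring
      · by_cases hl2 : l = k + 2
        · subst hl2
          have e1 : pvV (pbB A) (k+1) (k+2) = -(pbB A (k+1)) := by
            simp only [pvV]
            rw [if_neg (show ¬(k + 1 = k + 2 + 1) from by omega)]
            simp
          rw [e1, if_neg hl, if_pos rfl]
          ring
        · have e1 : pvV (pbB A) (k+1) l = 0 := by
            simp only [pvV]
            rw [if_neg (show ¬(k + 1 = l + 1) from by omega),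
              if_neg (show ¬(l = k + 1 + 1) from by omega)]
          rw [e1, if_neg hl, if_neg hl2]
          ring
    rw [Finset.sum_congr rfl hpt, Finset.sum_add_distrib,
      Finset.sum_ite_eq' (range N) k (fun l => pbB A k * pfF A j l),
      Finset.sum_ite_eq' (range N) (k+2) (fun l => -(pbB A (k+1)) * pfF A j l)]
    show _ = pbB A k * pfF A j k - pbB A (k + 1) * pfF A j (k + 2)
    simp only [Finset.mem_range]
    split_ifs with h1 h2 h3
    · ring
    · rw [pfF_eq_zero A j (k+2) (by omega)]
      ring
    · rw [pfF_eq_zero A j k (by omega)]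
      ring
    · rw [pfF_eq_zero A j k (by omega), pfF_eq_zero A j (k+2) (by omega)]
      ring


theorem detF (A : R) (n : ℕ) : (Matrix.of fun i j : Fin n => pfF A i j).det = 1 := by
  have hbt : (Matrix.of fun i j : Fin n => pfF A i j).BlockTriangular OrderDual.toDual :=
    fun i j h => pfF_eq_zero A i j (by simpa using h)
  rw [Matrix.det_of_lowerTriangular _ hbt]
  exact Finset.prod_eq_one fun i _ => pfF_diag A i

end Aux

theorem stmt_16 {R : Type*} [CommRing R] (A : R) (n : ℕ) (hn : 1 ≤ n)
    (α : ℕ → R) (hα0 : α 0 = 0) (hα : ∀ k, α (k + 1) = A ^ k) :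
    (Matrix.of fun i j : Fin (2 * n) =>
      pascalRec α (fun k => -α k) i j).det = A ^ (2 * (n - 1)) := by
  have hM : (Matrix.of fun i j : Fin (2 * n) => pascalRec α (fun k => -α k) i j)
      = (Matrix.of fun i j : Fin (2 * n) => pfF A i j)
        * (Matrix.of fun i j : Fin (2 * n) => pvV (pbB A) i j)
        * (Matrix.of fun i j : Fin (2 * n) => pfF A i j).transpose := by
    ext i j
    simp only [Matrix.mul_apply, Matrix.transpose_apply, Matrix.of_apply]
    rw [peq A α hα0 hα i j]
    have step1 : ∀ l : Fin (2*n),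
        (∑ k : Fin (2*n), pfF A i k * pvV (pbB A) k l) * pfF A j l
          = ∑ k : Fin (2*n), pfF A i k * (pvV (pbB A) k l * pfF A j l) := by
      intro l
      rw [Finset.sum_mul]
      exact Finset.sum_congr rfl fun k _ => by ring
    rw [Finset.sum_congr rfl fun l _ => step1 l, Finset.sum_comm]
    have step2 : ∀ k : Fin (2*n),
        (∑ l : Fin (2*n), pfF A i k * (pvV (pbB A) k l * pfF A j l))
          = pfF A i k * pcC A (j : ℕ) (k : ℕ) := by
      intro k
      rw [← Finset.mul_sum]
      congr 1
      rw [Fin.sum_univ_eq_sum_range (fun l => pvV (pbB A) (k : ℕ) l * pfF A (j : ℕ) l) (2*n)]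
      exact pcC_sum A j k (2*n) (by have := j.isLt; omega)
    rw [Finset.sum_congr rfl fun k _ => step2 k,
      Fin.sum_univ_eq_sum_range (fun k => pfF A (i : ℕ) k * pcC A (j : ℕ) k) (2*n),
      ← pG_ext A i j (2*n) (by have := i.isLt; omega)]
  rw [hM, Matrix.det_mul, Matrix.det_mul, Matrix.det_transpose, detF, detW A n hn]
  ring
end

section
/- Let M_a(n) be the n×n matrix with entries a^{|i−j|} for 0 ≤ i,j < n. Then det(M_a(n)) = (1 − a²)^{n−1} for n ≥ 1. -/
theorem stmt_17 {R : Type*} [CommRing R] (a : R) (n : ℕ) (hn : 1 ≤ n) :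
    (Matrix.of fun i j : Fin n =>
      a ^ (((i : ℤ) - (j : ℤ)).natAbs)).det = (1 - a ^ 2) ^ (n - 1) := by
  obtain ⟨m, rfl⟩ : ∃ m, n = m + 1 := ⟨n - 1, by omega⟩
  set M : Matrix (Fin (m+1)) (Fin (m+1)) R :=
    Matrix.of fun i j : Fin (m+1) => a ^ (((i : ℤ) - (j : ℤ)).natAbs) with hM
  have hMap : ∀ i j : Fin (m+1), M i j = a ^ (((i : ℤ) - (j : ℤ)).natAbs) :=
    fun i j => rfl
  set L : Matrix (Fin (m+1)) (Fin (m+1)) R :=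
    Matrix.of (fun i j : Fin (m+1) =>
      if i = j then 1 else if (j : ℕ) + 1 = (i : ℕ) then -a else 0) with hLdef
  have hLap : ∀ i j : Fin (m+1),
      L i j = if i = j then 1 else if (j : ℕ) + 1 = (i : ℕ) then -a else 0 :=
    fun i j => rfl
  have hL : L.det = 1 := by
    rw [Matrix.det_of_lowerTriangular]
    · simp [hLap]
    · intro i j hij
      have hij' : (i : ℕ) < (j : ℕ) := hij
      rw [hLap, if_neg (by intro h; subst h; omega), if_neg (by omega)]
  have key : ∀ (i j : Fin (m+1)), 1 ≤ (i : ℕ) →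
      (L * M) i j = M i j - a * M ⟨(i : ℕ) - 1, by omega⟩ j := by
    intro i j hi
    set i' : Fin (m+1) := ⟨(i : ℕ) - 1, by omega⟩ with hi'
    have hvi' : (i' : ℕ) = (i : ℕ) - 1 := rfl
    have hne : i ≠ i' := by
      intro h; apply_fun (Fin.val) at h; omega
    rw [Matrix.mul_apply]
    rw [← Finset.sum_subset (Finset.subset_univ {i, i'})]
    · rw [Finset.sum_pair hne]
      have e1 : L i i = 1 := by rw [hLap, if_pos rfl]
      have e2 : L i i' = -a := by
        rw [hLap, if_neg hne, if_pos (by omega)]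
      rw [e1, e2]; ring
    · intro k _ hk
      simp only [Finset.mem_insert, Finset.mem_singleton, not_or] at hk
      rw [hLap, if_neg (fun h => hk.1 h.symm), if_neg, zero_mul]
      intro h
      exact hk.2 (Fin.ext (by omega))
  have key0 : ∀ (j : Fin (m+1)), (L * M) 0 j = M 0 j := by
    intro j
    rw [Matrix.mul_apply, Finset.sum_eq_single 0]
    · rw [hLap, if_pos rfl, one_mul]
    · intro k _ hk
      have h1 : (0 : Fin (m+1)) ≠ k := fun h => hk h.symm
      rw [hLap, if_neg h1, if_neg (by simp), zero_mul]
    · simp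
  have hLM : (L * M).det = ∏ i : Fin (m+1), (L * M) i i := by
    apply Matrix.det_of_upperTriangular
    intro i j hij
    have hji : (j : ℕ) < (i : ℕ) := hij
    rw [key i j (by omega), hMap, hMap]
    have h1 : (((i : ℤ) - (j : ℤ))).natAbs = (i : ℕ) - (j : ℕ) := by omega
    have h2 : ((((i : ℕ) - 1 : ℕ) : ℤ) - (j : ℤ)).natAbs = (i : ℕ) - 1 - (j : ℕ) := by
      omega
    rw [h1, h2]
    have h3 : (i : ℕ) - (j : ℕ) = ((i : ℕ) - 1 - (j : ℕ)) + 1 := by omega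
    rw [h3, pow_succ]
    ring
  have hdiag : ∀ i : Fin (m+1), (L * M) i i = if (i : ℕ) = 0 then 1 else 1 - a ^ 2 := by
    intro i
    by_cases h : (i : ℕ) = 0
    · rw [if_pos h]
      have h0 : i = 0 := Fin.ext h
      rw [h0, key0, hMap]
      norm_num
    · rw [if_neg h, key i i (by omega), hMap, hMap]
      have h1 : (((i : ℤ) - (i : ℤ))).natAbs = 0 := by omega
      have h2 : ((((i : ℕ) - 1 : ℕ) : ℤ) - (i : ℤ)).natAbs = 1 := by omega
      rw [h1, h2, pow_zero, pow_one, sq]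
  have hprod : ∏ i : Fin (m+1), (L * M) i i = (1 - a ^ 2) ^ m := by
    simp only [hdiag]
    rw [Fin.prod_univ_succ]
    simp
  have hdet : (L * M).det = M.det := by rw [Matrix.det_mul, hL, one_mul]
  rw [← hdet, hLM, hprod]
  simp
end

section
/- Let D(n) be the n×n matrix with entries d_{i,j} = x^{min(i,j)}·(1+x)^{|i−j|} for 0 ≤ i,j < n. Then det(D(n)) = (−1−x−x²)^{n−1} · x^{C(n−1,2)} for n ≥ 1. -/
theorem stmt_18 {R : Type*} [CommRing R] (x : R) (n : ℕ) (hn : 1 ≤ n) :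
    (Matrix.of fun i j : Fin n =>
      x ^ (min (i : ℕ) (j : ℕ)) * (1 + x) ^ (((i : ℤ) - (j : ℤ)).natAbs)).det =
    (-1 - x - x ^ 2) ^ (n - 1) * x ^ ((n - 1).choose 2) := by
  obtain ⟨m, rfl⟩ : ∃ m, n = m + 1 := ⟨n - 1, by omega⟩
  set c : R := -1 - x - x ^ 2 with hc
  set M : Matrix (Fin (m+1)) (Fin (m+1)) R := Matrix.of fun i j : Fin (m+1) =>
      x ^ (min (i : ℕ) (j : ℕ)) * (1 + x) ^ (((i : ℤ) - (j : ℤ)).natAbs) with hM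
  set L : Matrix (Fin (m+1)) (Fin (m+1)) R := Matrix.of fun i j : Fin (m+1) =>
      (if (i:ℕ) = (j:ℕ) then (1:R) else 0) +
      (if (i:ℕ) = (j:ℕ) + 1 then -(1+x) else 0) with hL
  set T : Matrix (Fin (m+1)) (Fin (m+1)) R := Matrix.of fun i j : Fin (m+1) =>
      if (i:ℕ) = 0 then (1+x) ^ (j:ℕ)
      else if (j:ℕ) < (i:ℕ) then 0
      else x ^ ((i:ℕ) - 1) * (1+x) ^ ((j:ℕ) - (i:ℕ)) * c with hT
  have hLval : ∀ i j : Fin (m+1), L i j =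
      (if (i:ℕ) = (j:ℕ) then (1:R) else 0) +
      (if (i:ℕ) = (j:ℕ) + 1 then -(1+x) else 0) := fun i j => rfl
  have hMval : ∀ i j : Fin (m+1), M i j =
      x ^ (min (i : ℕ) (j : ℕ)) * (1 + x) ^ (((i : ℤ) - (j : ℤ)).natAbs) := fun i j => rfl
  have hLM : L * M = T := by
    ext i j
    rw [Matrix.mul_apply]
    by_cases hi : (i:ℕ) = 0
    · have key : ∑ k : Fin (m+1), L i k * M k j = L i i * M i j :=
        Finset.sum_eq_single i
          (fun k _ hk => by
            rw [hLval, if_neg (fun h => hk (Fin.ext h.symm)), if_neg (by omega),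
              add_zero, zero_mul])
          (fun h => absurd (Finset.mem_univ i) h)
      rw [key, hLval, if_pos rfl, if_neg (by omega), add_zero, one_mul, hMval]
      have e1 : ((i : ℤ) - (j : ℤ)).natAbs = (j:ℕ) := by omega
      have e2 : min (i:ℕ) (j:ℕ) = 0 := by omega
      rw [e1, e2, pow_zero, one_mul]
      show _ = T i j
      rw [hT]
      simp only [Matrix.of_apply]
      rw [if_pos hi]
    · have hip : (i:ℕ) - 1 < m + 1 := by omega
      set i' : Fin (m+1) := ⟨(i:ℕ) - 1, hip⟩ with hi'def
      have hii' : (i':ℕ) = (i:ℕ) - 1 := rfl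
      have hne : i ≠ i' := fun h => by
        have : (i:ℕ) = (i':ℕ) := congrArg Fin.val h
        omega
      have key : ∑ k : Fin (m+1), L i k * M k j = L i i * M i j + L i i' * M i' j :=
        Finset.sum_eq_add i i' hne
          (fun k _ hk => by
            rw [hLval, if_neg (fun h => hk.1 (Fin.ext h.symm)),
              if_neg (fun h => hk.2 (Fin.ext (by omega))), add_zero, zero_mul])
          (fun h => absurd (Finset.mem_univ i) h)
          (fun h => absurd (Finset.mem_univ i') h)
      rw [key, hLval i i, hLval i i', if_pos rfl, if_neg (by omega), add_zero, one_mul,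
        if_neg (by omega), if_pos (by omega), zero_add, hMval, hMval]
      show _ = T i j
      rw [hT]
      simp only [Matrix.of_apply]
      rw [if_neg hi]
      by_cases hj : (j:ℕ) < (i:ℕ)
      · rw [if_pos hj]
        have e1 : ((i : ℤ) - (j : ℤ)).natAbs = ((i:ℕ) - 1 - (j:ℕ)) + 1 := by omega
        have e2 : min (i:ℕ) (j:ℕ) = (j:ℕ) := by omega
        have e3 : ((i' : ℤ) - (j : ℤ)).natAbs = (i:ℕ) - 1 - (j:ℕ) := by omega
        have e4 : min (i':ℕ) (j:ℕ) = (j:ℕ) := by omega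
        rw [e1, e2, e3, e4, pow_succ]
        ring
      · rw [if_neg hj]
        have e1 : ((i : ℤ) - (j : ℤ)).natAbs = (j:ℕ) - (i:ℕ) := by omega
        have e2 : min (i:ℕ) (j:ℕ) = ((i:ℕ) - 1) + 1 := by omega
        have e3 : ((i' : ℤ) - (j : ℤ)).natAbs = ((j:ℕ) - (i:ℕ)) + 1 := by omega
        have e4 : min (i':ℕ) (j:ℕ) = (i:ℕ) - 1 := by omega
        rw [e1, e2, e3, e4, pow_succ, pow_succ, hc]
        ring
  have hTtri : T.BlockTriangular id := by
    intro i j h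
    have h' : (j:ℕ) < (i:ℕ) := h
    show (Matrix.of _ : Matrix (Fin (m+1)) (Fin (m+1)) R) i j = 0
    simp only [Matrix.of_apply]
    rw [if_neg (by omega), if_pos h']
  have hLtri : L.BlockTriangular OrderDual.toDual := by
    intro i j h
    have h' : (i:ℕ) < (j:ℕ) := h
    rw [hLval, if_neg (by omega), if_neg (by omega), add_zero]
  have hdetL : L.det = 1 := by
    rw [Matrix.det_of_lowerTriangular L hLtri]
    apply Finset.prod_eq_one
    intro i _
    rw [hLval, if_pos rfl, if_neg (by omega), add_zero]
  have hdetT : T.det = c ^ m * x ^ (m.choose 2) := by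
    rw [Matrix.det_of_upperTriangular hTtri, Fin.prod_univ_succ]
    have h0 : T 0 0 = 1 := by
      show (Matrix.of _ : Matrix (Fin (m+1)) (Fin (m+1)) R) 0 0 = 1
      simp
    have hs : ∀ i : Fin m, T i.succ i.succ = x ^ (i:ℕ) * c := by
      intro i
      show (Matrix.of _ : Matrix (Fin (m+1)) (Fin (m+1)) R) i.succ i.succ = _
      simp only [Matrix.of_apply, Fin.val_succ]
      rw [if_neg (by omega), if_neg (by omega)]
      simp
    rw [h0, one_mul, Finset.prod_congr rfl (fun i _ => hs i), Finset.prod_mul_distrib,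
      Finset.prod_const, Finset.prod_pow_eq_pow_sum]
    have hsum : ∑ i : Fin m, (i:ℕ) = m.choose 2 := by
      rw [Fin.sum_univ_eq_sum_range (fun i => i) m, Finset.sum_range_id,
        Nat.choose_two_right]
    rw [hsum, Finset.card_univ, Fintype.card_fin, mul_comm]
  have hdet := congrArg Matrix.det hLM
  rw [Matrix.det_mul, hdetL, one_mul] at hdet
  rw [hdet, hdetT]
  simp
end

section
/- Let D(n) be the n×n matrix with entries d_{i,j} = x^{min(i,j)}·(x−1)^{|i−j|} for 0 ≤ i,j < n. Then det(D(n)) = (−x²+3x−1)^{n−1} · x^{C(n−1,2)} for n ≥ 1. -/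
theorem stmt_19 {R : Type*} [CommRing R] (x : R) (n : ℕ) (hn : 1 ≤ n) :
    (Matrix.of fun i j : Fin n =>
      x ^ (min (i : ℕ) (j : ℕ)) * (x - 1) ^ (((i : ℤ) - (j : ℤ)).natAbs)).det =
    (-x ^ 2 + 3 * x - 1) ^ (n - 1) * x ^ ((n - 1).choose 2) := by
  set c : R := -x ^ 2 + 3 * x - 1 with hc
  set D : Matrix (Fin n) (Fin n) R := Matrix.of fun i j : Fin n =>
    x ^ (min (i : ℕ) (j : ℕ)) * (x - 1) ^ (((i : ℤ) - (j : ℤ)).natAbs) with hD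
  set L : Matrix (Fin n) (Fin n) R := Matrix.of fun i j : Fin n =>
    if i = j then 1 else if (j : ℕ) + 1 = (i : ℕ) then -(x - 1) else 0 with hL
  set U : Matrix (Fin n) (Fin n) R := Matrix.of fun i j : Fin n =>
    if (i : ℕ) = 0 then D i j
    else if (j : ℕ) < (i : ℕ) then 0
    else c * x ^ ((i : ℕ) - 1) * (x - 1) ^ ((j : ℕ) - (i : ℕ)) with hU
  have hLdet : L.det = 1 := by
    have hlt : L.BlockTriangular OrderDual.toDual := by
      intro i j hij
      have hij' : (i : ℕ) < (j : ℕ) := hij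
      have h1 : i ≠ j := by
        intro h; subst h; omega
      have h2 : ¬ ((j : ℕ) + 1 = (i : ℕ)) := by omega
      simp only [hL, Matrix.of_apply]
      rw [if_neg h1, if_neg h2]
    rw [Matrix.det_of_lowerTriangular L hlt]
    simp [hL]
  have hLU : L * D = U := by
    ext i j
    rw [Matrix.mul_apply]
    rcases i with ⟨iv, hiv⟩
    rcases iv with _ | m
    · -- i = 0
      have : ∀ k : Fin n, L ⟨0, hiv⟩ k * D k j =
          if k = ⟨0, hiv⟩ then D k j else 0 := by
        intro k
        by_cases hk : k = ⟨0, hiv⟩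
        · subst hk; simp [hL]
        · have : ¬ ((⟨0, hiv⟩ : Fin n) = k) := fun h => hk h.symm
          simp [hL, this, hk]
      rw [Finset.sum_congr rfl fun k _ => this k, Finset.sum_ite_eq' Finset.univ]
      simp [hU]
    · -- i = m+1
      have hm : m < n := by omega
      have key : ∀ k : Fin n, L ⟨m + 1, hiv⟩ k * D k j =
          (if k = ⟨m + 1, hiv⟩ then D k j else 0) +
          (if k = ⟨m, hm⟩ then -(x - 1) * D k j else 0) := by
        intro k
        rcases k with ⟨kv, hkv⟩
        simp only [hL, Matrix.of_apply, Fin.mk.injEq]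
        by_cases h1 : kv = m + 1
        · rw [if_pos (by omega : m + 1 = kv), if_pos h1, if_neg (by omega : ¬ kv = m)]
          ring
        · by_cases h2 : kv = m
          · rw [if_neg (by omega : ¬ m + 1 = kv), if_pos (by omega : kv + 1 = m + 1),
              if_neg h1, if_pos h2]
            ring
          · rw [if_neg (by omega : ¬ m + 1 = kv), if_neg (by omega : ¬ kv + 1 = m + 1),
              if_neg h1, if_neg h2]
            ring
      rw [Finset.sum_congr rfl fun k _ => key k, Finset.sum_add_distrib,
        Finset.sum_ite_eq' Finset.univ, Finset.sum_ite_eq' Finset.univ]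
      simp only [Finset.mem_univ, if_true]
      -- now: D ⟨m+1,_⟩ j + -(x-1) * D ⟨m,_⟩ j = U ⟨m+1,_⟩ j
      rcases j with ⟨jv, hjv⟩
      simp only [hD, hU, Matrix.of_apply]
      rw [if_neg (by omega : ¬ (m + 1) = 0)]
      by_cases hj : jv < m + 1
      · rw [if_pos hj]
        have h1 : min (m + 1) jv = jv := by omega
        have h2 : min m jv = jv := by omega
        have h3 : (((m + 1 : ℕ) : ℤ) - (jv : ℤ)).natAbs = (m - jv) + 1 := by omega
        have h4 : ((m : ℤ) - jv).natAbs = m - jv := by omega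
        rw [h1, h2, h3, h4, pow_succ]
        ring
      · rw [if_neg hj]
        have h1 : min (m + 1) jv = m + 1 := by omega
        have h2 : min m jv = m := by omega
        have h3 : (((m + 1 : ℕ) : ℤ) - (jv : ℤ)).natAbs = jv - (m + 1) := by omega
        have h4 : ((m : ℤ) - jv).natAbs = (jv - (m + 1)) + 1 := by omega
        have h5 : jv - (m + 1) = jv - (m + 1) := rfl
        rw [h1, h2, h3, h4]
        have : m + 1 - 1 = m := rfl
        rw [this, pow_succ, pow_succ, hc]
        ring
  have hUdet : U.det = ∏ i : Fin n, U i i := by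
    apply Matrix.det_of_upperTriangular
    intro i j hij
    have hij' : (j : ℕ) < (i : ℕ) := hij
    simp only [hU, Matrix.of_apply]
    rw [if_neg (by omega), if_pos hij']
  have hDdet : D.det = U.det := by
    calc D.det = L.det * D.det := by rw [hLdet, one_mul]
    _ = (L * D).det := (Matrix.det_mul L D).symm
    _ = U.det := by rw [hLU]
  rw [hDdet, hUdet]
  have hdiag : ∀ i : Fin n, U i i = if (i : ℕ) = 0 then 1 else c * x ^ ((i : ℕ) - 1) := by
    intro i
    simp only [hU, hD, Matrix.of_apply]
    by_cases hi : (i : ℕ) = 0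
    · simp [hi]
    · rw [if_neg hi, if_neg hi, if_neg (lt_irrefl _)]
      simp
  rw [Finset.prod_congr rfl fun i _ => hdiag i]
  rw [Fin.prod_univ_eq_prod_range (fun i => if i = 0 then 1 else c * x ^ (i - 1))]
  obtain ⟨m, rfl⟩ : ∃ m, n = m + 1 := ⟨n - 1, by omega⟩
  rw [Finset.prod_range_succ']
  have e1 : ∀ i ∈ Finset.range m,
      (if i + 1 = 0 then (1 : R) else c * x ^ (i + 1 - 1)) = c * x ^ i := by
    intro i _
    rw [if_neg (by omega), Nat.add_sub_cancel]
  rw [Finset.prod_congr rfl e1, Finset.prod_mul_distrib, Finset.prod_const,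
    Finset.prod_pow_eq_pow_sum, Finset.sum_range_id, Nat.choose_two_right]
  simp
end
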